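/- arXiv:1706.04703 — 8 statements merged into one kernel-verified Lean document; each statement's English description precedes it below -/
import Mathlib

section
/- Every (n₁,…,n_m)-homogeneous polynomial P : E^m → F is an M-homogeneous polynomial on the product space E^m, where M = n₁+⋯+n_m; that is, there exists an M-linear map A : (E^m)^M → F such that P(z) = A(z,…,z) for every z = (x₁,…,x_m) ∈ E^m. -/
open scoped BigOperators

/-- `P : E → F` is an `m`-homogeneous polynomial if there is an `m`-linear map
`A : E^m → F` with `P x = A (x, …, x)` for all `x`. -/
def IsHomogPoly (𝕂 : Type*) [RCLike 𝕂] {E F : Type*} [AddCommGroup E] [Module 𝕂 E]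
    [AddCommGroup F] [Module 𝕂 F] (m : ℕ) (P : E → F) : Prop :=
  ∃ A : MultilinearMap 𝕂 (fun _ : Fin m => E) F, ∀ x, P x = A fun _ => x

/-- `P : E^m → F` is an `(n 0, …, n (m-1))`-homogeneous polynomial (multipolynomial) if,
for each `j`, the map `x ↦ P (x₁, …, x_{j-1}, x, x_{j+1}, …, x_m)` is an `n j`-homogeneous
polynomial when the remaining variables are kept fixed. -/
def IsMultiPoly (𝕂 : Type*) [RCLike 𝕂] {E F : Type*} [AddCommGroup E] [Module 𝕂 E]
    [AddCommGroup F] [Module 𝕂 F] {m : ℕ} (n : Fin m → ℕ) (P : (Fin m → E) → F) : Prop :=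
  ∀ (j : Fin m) (x : Fin m → E), IsHomogPoly 𝕂 (n j) fun y => P (Function.update x j y)

section Pol
variable {𝕂 : Type*} [RCLike 𝕂] {E F : Type*} [AddCommGroup E] [Module 𝕂 E]
  [AddCommGroup F] [Module 𝕂 F]

/-- The polarization formula, as a raw function of `P`. -/
noncomputable def polFun (𝕂 : Type*) [RCLike 𝕂] {E F : Type*} [AddCommGroup E] [Module 𝕂 E]
    [AddCommGroup F] [Module 𝕂 F] (n : ℕ) (P : E → F) (y : Fin n → E) : F :=
  ((n.factorial : 𝕂))⁻¹ •
    ∑ S : Finset (Fin n), ((-1 : 𝕂) ^ (n - S.card)) • P (∑ i ∈ S, y i)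

lemma aux_sum_filter {n : ℕ} (r : Fin n → Fin n) :
    (∑ S ∈ Finset.univ.filter (fun S : Finset (Fin n) => ∀ i, r i ∈ S),
      (-1 : 𝕂) ^ (n - S.card)) = if Function.Bijective r then 1 else 0 := by
  classical
  have himg : ∀ S : Finset (Fin n), (∀ i, r i ∈ S) ↔ Finset.image r Finset.univ ⊆ S := by
    intro S
    rw [Finset.image_subset_iff]
    simp
  rw [Finset.filter_congr (fun S _ => himg S)]
  have hbij : (Finset.image r Finset.univ)ᶜ = ∅ ↔ Function.Bijective r := by
    rw [Finset.compl_eq_empty_iff, Finset.eq_univ_iff_forall]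
    constructor
    · intro h
      have hsurj : Function.Surjective r := by
        intro b
        obtain ⟨a, _, ha⟩ := Finset.mem_image.1 (h b)
        exact ⟨a, ha⟩
      exact Finite.surjective_iff_bijective.1 hsurj
    · intro h b
      obtain ⟨a, ha⟩ := h.2 b
      exact Finset.mem_image.2 ⟨a, Finset.mem_univ a, ha⟩
  have key : ∀ (R : Finset (Fin n)),
      (∑ S ∈ Finset.univ.filter (fun S : Finset (Fin n) => R ⊆ S), (-1 : 𝕂) ^ (n - S.card))
        = if Rᶜ = ∅ then 1 else 0 := by
    intro R
    have : (∑ S ∈ Finset.univ.filter (fun S : Finset (Fin n) => R ⊆ S),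
        (-1 : 𝕂) ^ (n - S.card)) = ∑ T ∈ Rᶜ.powerset, (-1 : 𝕂) ^ T.card := by
      refine Finset.sum_nbij' (i := fun S => Sᶜ) (j := fun T => Tᶜ) ?_ ?_ ?_ ?_ ?_
      · intro S hS
        rw [Finset.mem_powerset]
        exact Finset.compl_subset_compl.2 (Finset.mem_filter.1 hS).2
      · intro T hT
        rw [Finset.mem_filter]
        refine ⟨Finset.mem_univ _, ?_⟩
        rw [← Finset.compl_subset_compl, compl_compl]
        exact Finset.mem_powerset.1 hT
      · intro S _; exact compl_compl S
      · intro T _; exact compl_compl T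
      · intro S _
        congr 1
        rw [Finset.card_compl, Fintype.card_fin]
    rw [this]
    have := Finset.sum_powerset_neg_one_pow_card (x := Rᶜ)
    calc (∑ T ∈ Rᶜ.powerset, (-1 : 𝕂) ^ T.card)
        = ((∑ T ∈ Rᶜ.powerset, (-1 : ℤ) ^ T.card : ℤ) : 𝕂) := by push_cast; rfl
      _ = _ := by rw [this]; split <;> simp
  rw [key]
  simp only [hbij]

lemma polFun_eq_sum_perm {n : ℕ} (A : MultilinearMap 𝕂 (fun _ : Fin n => E) F)
    (y : Fin n → E) :
    polFun 𝕂 n (fun x => A fun _ => x) y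
      = (n.factorial : 𝕂)⁻¹ • ∑ σ : Equiv.Perm (Fin n), A (fun i => y (σ i)) := by
  classical
  unfold polFun
  congr 1
  have h1 : ∀ S : Finset (Fin n), (A fun _ : Fin n => ∑ i ∈ S, y i)
      = ∑ r ∈ Fintype.piFinset (fun _ : Fin n => S), A (fun i => y (r i)) := fun S =>
    A.map_sum_finset (fun _ j => y j) (fun _ => S)
  calc (∑ S : Finset (Fin n), ((-1 : 𝕂) ^ (n - S.card)) • (A fun _ => ∑ i ∈ S, y i))
      = ∑ S : Finset (Fin n), ∑ r ∈ Fintype.piFinset (fun _ : Fin n => S),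
          ((-1 : 𝕂) ^ (n - S.card)) • A (fun i => y (r i)) := by
        simp_rw [h1, Finset.smul_sum]
    _ = ∑ r : Fin n → Fin n, ∑ S ∈ Finset.univ.filter
          (fun S : Finset (Fin n) => ∀ i, r i ∈ S),
          ((-1 : 𝕂) ^ (n - S.card)) • A (fun i => y (r i)) := by
        refine Finset.sum_comm' ?_
        intro S r
        simp [Fintype.mem_piFinset]
    _ = ∑ r : Fin n → Fin n, (if Function.Bijective r then (1 : 𝕂) else 0)
          • A (fun i => y (r i)) := by
        refine Finset.sum_congr rfl fun r _ => ?_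
        rw [← Finset.sum_smul, aux_sum_filter]
    _ = ∑ r ∈ Finset.univ.filter (fun r : Fin n → Fin n => Function.Bijective r),
          A (fun i => y (r i)) := by
        rw [Finset.sum_filter]
        refine Finset.sum_congr rfl fun r _ => ?_
        split <;> simp
    _ = ∑ σ : Equiv.Perm (Fin n), A (fun i => y (σ i)) := by
        refine (Finset.sum_bij (fun (σ : Equiv.Perm (Fin n)) _ => ⇑σ) ?_ ?_ ?_ ?_).symm
        · intro σ _
          exact Finset.mem_filter.2 ⟨Finset.mem_univ _, σ.bijective⟩
        · intro σ _ τ _ h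
          exact Equiv.coe_fn_injective h
        · intro r hr
          have hb : Function.Bijective r := (Finset.mem_filter.1 hr).2
          exact ⟨Equiv.ofBijective r hb, Finset.mem_univ _, rfl⟩
        · intro σ _
          rfl

end Pol

section Layer2
variable {𝕂 : Type*} [RCLike 𝕂] {E F : Type*} [AddCommGroup E] [Module 𝕂 E]
  [AddCommGroup F] [Module 𝕂 F]

lemma IsHomogPoly.exists_polFun {n : ℕ} {P : E → F} (h : IsHomogPoly 𝕂 n P) :
    ∃ S : MultilinearMap 𝕂 (fun _ : Fin n => E) F,
      (∀ y, S y = polFun 𝕂 n P y) ∧ ∀ x, S (fun _ => x) = P x := by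
  obtain ⟨A, hA⟩ := h
  have hfact : ((n.factorial : 𝕂)) ≠ 0 := by
    exact_mod_cast Nat.cast_ne_zero.2 n.factorial_ne_zero
  refine ⟨(n.factorial : 𝕂)⁻¹ • ∑ σ : Equiv.Perm (Fin n), A.domDomCongr σ, ?_, ?_⟩
  · intro y
    have hPA : P = fun x => A fun _ => x := funext hA
    rw [hPA, polFun_eq_sum_perm]
    simp [MultilinearMap.domDomCongr]
  · intro x
    have : ∀ σ : Equiv.Perm (Fin n), (A.domDomCongr σ) (fun _ => x) = A (fun _ => x) :=
      fun σ => rfl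
    simp only [MultilinearMap.smul_apply, MultilinearMap.sum_apply, this,
      Finset.sum_const, Finset.card_univ, Fintype.card_perm, Fintype.card_fin]
    rw [← Nat.cast_smul_eq_nsmul 𝕂, smul_smul, inv_mul_cancel₀ hfact, one_smul]
    exact (hA x).symm

lemma polFun_update_add {n : ℕ} [DecidableEq (Fin n)] {P : E → F} (h : IsHomogPoly 𝕂 n P) (y : Fin n → E)
    (i : Fin n) (a b : E) :
    polFun 𝕂 n P (Function.update y i (a + b)) =
      polFun 𝕂 n P (Function.update y i a) + polFun 𝕂 n P (Function.update y i b) := by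
  obtain ⟨S, hS, -⟩ := h.exists_polFun
  rw [← hS, ← hS, ← hS, S.map_update_add]

lemma polFun_update_smul {n : ℕ} [DecidableEq (Fin n)] {P : E → F} (h : IsHomogPoly 𝕂 n P) (y : Fin n → E)
    (i : Fin n) (c : 𝕂) (a : E) :
    polFun 𝕂 n P (Function.update y i (c • a)) = c • polFun 𝕂 n P (Function.update y i a) := by
  obtain ⟨S, hS, -⟩ := h.exists_polFun
  rw [← hS, ← hS, S.map_update_smul]

lemma polFun_diag {n : ℕ} {P : E → F} (h : IsHomogPoly 𝕂 n P) (x : E) :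
    polFun 𝕂 n P (fun _ => x) = P x := by
  obtain ⟨S, hS, hd⟩ := h.exists_polFun
  rw [← hS, hd]

lemma IsHomogPoly.const_smul {n : ℕ} {P : E → F} (c : 𝕂) (h : IsHomogPoly 𝕂 n P) :
    IsHomogPoly 𝕂 n (fun x => c • P x) := by
  obtain ⟨A, hA⟩ := h
  exact ⟨c • A, fun x => by simp [hA x]⟩

lemma isHomogPoly_sum {n : ℕ} {ι : Type*} (s : Finset ι) (P : ι → E → F)
    (h : ∀ i ∈ s, IsHomogPoly 𝕂 n (P i)) :
    IsHomogPoly 𝕂 n (fun x => ∑ i ∈ s, P i x) := by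
  classical
  induction s using Finset.induction_on with
  | empty => exact ⟨0, by simp⟩
  | insert a s hnot ih =>
    obtain ⟨A, hA⟩ := h a (Finset.mem_insert_self a s)
    obtain ⟨B, hB⟩ := ih fun i hi => h i (Finset.mem_insert_of_mem hi)
    refine ⟨A + B, fun x => ?_⟩
    simp only [Finset.sum_insert hnot, hA x, MultilinearMap.add_apply]
    exact congrArg _ (hB x)

lemma isHomogPoly_polFun {d e : ℕ} {G : E → E → F}
    (hG : ∀ b, IsHomogPoly 𝕂 d (fun a => G a b)) (y : Fin e → E) :
    IsHomogPoly 𝕂 d (fun a => polFun 𝕂 e (G a) y) := by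
  unfold polFun
  refine IsHomogPoly.const_smul _
    (isHomogPoly_sum Finset.univ
      (fun (S : Finset (Fin e)) a => ((-1 : 𝕂) ^ (e - S.card)) • G a (∑ i ∈ S, y i))
      fun S _ => IsHomogPoly.const_smul _ (hG _))

lemma polFun_comm {k n : ℕ} (G : E → E → F) (u : Fin k → E) (y : Fin n → E) :
    polFun 𝕂 n (fun w => polFun 𝕂 k (fun v => G v w) u) y
      = polFun 𝕂 k (fun v => polFun 𝕂 n (fun w => G v w) y) u := by
  unfold polFun
  simp only [Finset.smul_sum, smul_smul]
  rw [Finset.sum_comm (γ := Finset (Fin n)) (α := Finset (Fin k))]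
  refine Finset.sum_congr rfl fun T _ => ?_
  refine Finset.sum_congr rfl fun S _ => ?_
  congr 1
  ring

lemma polFun_congr {n : ℕ} {P Q : E → F} (h : ∀ x, P x = Q x) (y : Fin n → E) :
    polFun 𝕂 n P y = polFun 𝕂 n Q y := by
  unfold polFun
  simp_rw [h]

end Layer2


section Main
universe u v

set_option maxHeartbeats 1000000 in
theorem multipoly_aux {𝕂 : Type*} [RCLike 𝕂] {E : Type u} [AddCommGroup E] [Module 𝕂 E] :
    ∀ (m : ℕ) (F : Type (max u v)) [AddCommGroup F] [Module 𝕂 F]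
      (n : Fin m → ℕ) (P : (Fin m → E) → F), IsMultiPoly 𝕂 n P →
      ∃ A : MultilinearMap 𝕂 (fun _ : Fin (∑ j, n j) => (Fin m → E)) F,
        ∀ z : Fin m → E, P z = A fun _ => z := by
  intro m
  induction m with
  | zero =>
    intro F _ _ n P _
    haveI : IsEmpty (Fin (∑ j, n j)) := by
      rw [show (∑ j, n j) = 0 by simp]
      infer_instance
    refine ⟨MultilinearMap.constOfIsEmpty 𝕂 _ (P (fun i => i.elim0)), fun z => ?_⟩
    rw [MultilinearMap.constOfIsEmpty_apply]
    exact congrArg P (funext fun i => i.elim0)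
  | succ m IH =>
    intro F _ _ n P hP
    classical
    set N := n (Fin.last m) with hN
    have Hlast : ∀ x : Fin m → E, IsHomogPoly 𝕂 N (fun w => P (Fin.snoc x w)) := by
      intro x
      have h := hP (Fin.last m) (Fin.snoc x 0)
      simpa only [Fin.update_snoc_last] using h
    have hkey : ∀ (j : Fin m) (x : Fin m → E) (w : E),
        IsHomogPoly 𝕂 (n j.castSucc) (fun v => P (Fin.snoc (Function.update x j v) w)) := by
      intro j x w
      have h := hP j.castSucc (Fin.snoc x w)
      simpa only [← Fin.snoc_update] using h
    set P' : (Fin m → E) → MultilinearMap 𝕂 (fun _ : Fin N => E) F := fun x =>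
      { toFun := fun y => polFun 𝕂 N (fun w => P (Fin.snoc x w)) y
        map_update_add' := fun y i a b => polFun_update_add (Hlast x) y i a b
        map_update_smul' := fun y i c a => polFun_update_smul (Hlast x) y i c a } with hP'def
    have hP'1 : ∀ (x : Fin m → E) (y : Fin N → E),
        P' x y = polFun 𝕂 N (fun w => P (Fin.snoc x w)) y := fun _ _ => rfl
    have hmulti : IsMultiPoly 𝕂 (fun j : Fin m => n j.castSucc) P' := by
      intro j x
      have hQ : ∀ (u : Fin (n j.castSucc) → E), IsHomogPoly 𝕂 N
          (fun w => polFun 𝕂 (n j.castSucc)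
            (fun v => P (Fin.snoc (Function.update x j v) w)) u) := by
        intro u
        exact isHomogPoly_polFun
          (G := fun w v => P (Fin.snoc (Function.update x j v) w))
          (fun v => Hlast (Function.update x j v)) u
      have hR : ∀ (y : Fin N → E), IsHomogPoly 𝕂 (n j.castSucc)
          (fun v => polFun 𝕂 N (fun w => P (Fin.snoc (Function.update x j v) w)) y) := by
        intro y
        exact isHomogPoly_polFun
          (G := fun v w => P (Fin.snoc (Function.update x j v) w))
          (fun w => hkey j x w) y
      have hswap : ∀ (u : Fin (n j.castSucc) → E) (y : Fin N → E),
          polFun 𝕂 N (fun w => polFun 𝕂 (n j.castSucc)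
              (fun v => P (Fin.snoc (Function.update x j v) w)) u) y
            = polFun 𝕂 (n j.castSucc)
              (fun v => polFun 𝕂 N (fun w => P (Fin.snoc (Function.update x j v) w)) y) u :=
        fun u y => polFun_comm (fun v w => P (Fin.snoc (Function.update x j v) w)) u y
      refine ⟨{ toFun := fun u => { toFun := fun y => polFun 𝕂 N (fun w => polFun 𝕂 (n j.castSucc) (fun v => P (Fin.snoc (Function.update x j v) w)) u) y, map_update_add' := fun y i a b => polFun_update_add (hQ u) y i a b, map_update_smul' := fun y i c a => polFun_update_smul (hQ u) y i c a }, map_update_add' := ?_, map_update_smul' := ?_ }, ?_⟩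
      · intro inst u i a b
        ext y
        simp only [MultilinearMap.coe_mk, MultilinearMap.add_apply]
        rw [hswap, hswap, hswap]
        exact polFun_update_add (hR y) u i a b
      · intro inst u i c a
        ext y
        simp only [MultilinearMap.coe_mk, MultilinearMap.smul_apply]
        rw [hswap, hswap]
        exact polFun_update_smul (hR y) u i c a
      · intro v
        ext y
        simp only [MultilinearMap.coe_mk]
        rw [hP'1]
        exact polFun_congr (fun w => (polFun_diag (hkey j x w) v).symm) y
    obtain ⟨B, hB⟩ := IH (MultilinearMap 𝕂 (fun _ : Fin N => E) F) (fun j => n j.castSucc) P' hmulti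
    set π₁ : ((Fin (m+1) → E)) →ₗ[𝕂] (Fin m → E) := LinearMap.funLeft 𝕂 E Fin.castSucc
    set π₂ : ((Fin (m+1) → E)) →ₗ[𝕂] E := LinearMap.proj (Fin.last m)
    set B₁ := B.compLinearMap (fun _ => π₁) with hB₁
    set ℓ : MultilinearMap 𝕂 (fun _ : Fin N => E) F →ₗ[𝕂] MultilinearMap 𝕂 (fun _ : Fin N => (Fin (m+1) → E)) F :=
      MultilinearMap.compLinearMapₗ (fun _ => π₂) with hℓ
    set B₂ := ℓ.compMultilinearMap B₁ with hB₂
    set B₃ := B₂.uncurrySum (R := 𝕂) (ι' := Fin N) (N := fun _ => Fin (m+1) → E) with hB₃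
    have hsum : (∑ j, n j) = (∑ j : Fin m, n j.castSucc) + N := Fin.sum_univ_castSucc n
    refine ⟨B₃.domDomCongr ((finSumFinEquiv).trans (finCongr hsum.symm)), fun z => ?_⟩
    calc P z = P (Fin.snoc (Fin.init z) (z (Fin.last m))) := by rw [Fin.snoc_init_self]
      _ = polFun 𝕂 N (fun w => P (Fin.snoc (Fin.init z) w)) (fun _ => z (Fin.last m)) :=
          (polFun_diag (Hlast _) _).symm
      _ = P' (Fin.init z) (fun _ => z (Fin.last m)) := rfl
      _ = (B fun _ => Fin.init z) (fun _ => z (Fin.last m)) := by rw [hB]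
      _ = (B₃.domDomCongr ((finSumFinEquiv).trans (finCongr hsum.symm))) (fun _ => z) := rfl

end Main

theorem multipoly_aux' {𝕂 : Type*} [RCLike 𝕂] {E : Type u} [AddCommGroup E] [Module 𝕂 E]
    {F : Type w} [AddCommGroup F] [Module 𝕂 F]
    {m : ℕ} (n : Fin m → ℕ) (P : (Fin m → E) → F) (hP : IsMultiPoly 𝕂 n P) :
    ∃ A : MultilinearMap 𝕂 (fun _ : Fin (∑ j, n j) => (Fin m → E)) F,
      ∀ z : Fin m → E, P z = A fun _ => z := by
  let up : F →ₗ[𝕂] ULift.{u} F := ULift.moduleEquiv.symm.toLinearMap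
  have hP' : IsMultiPoly 𝕂 n (fun z => up (P z)) := by
    intro j x
    obtain ⟨A, hA⟩ := hP j x
    exact ⟨up.compMultilinearMap A, fun y => congrArg _ (hA y)⟩
  obtain ⟨A₀, hA₀⟩ := multipoly_aux m (ULift.{u} F) n (fun z => up (P z)) hP'
  refine ⟨(ULift.moduleEquiv.toLinearMap : ULift.{u} F →ₗ[𝕂] F).compMultilinearMap A₀,
    fun z => ?_⟩
  have h1 := hA₀ z
  calc P z = ULift.moduleEquiv (up (P z)) := rfl
    _ = ULift.moduleEquiv (A₀ fun _ => z) := by rw [← h1]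
    _ = _ := rfl


/-- Every `(n₁, …, n_m)`-homogeneous polynomial `P : E^m → F` is an `M`-homogeneous
polynomial on the product space `E^m`, where `M = n₁ + ⋯ + n_m`. -/
theorem multipoly_isHomogPoly {𝕂 : Type*} [RCLike 𝕂] {E F : Type*}
    [AddCommGroup E] [Module 𝕂 E] [AddCommGroup F] [Module 𝕂 F]
    {m : ℕ} (n : Fin m → ℕ) (P : (Fin m → E) → F) (hP : IsMultiPoly 𝕂 n P) :
    ∃ A : MultilinearMap 𝕂 (fun _ : Fin (∑ j, n j) => (Fin m → E)) F,
      ∀ z : Fin m → E, P z = A fun _ => z := by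
  exact multipoly_aux' n P hP
end

section
/- Every (k,m)-linear mapping is a km-homogeneous polynomial: if P : E^k → F is an (m,…,m)-homogeneous polynomial (m repeated k times), then there exists a km-linear map A : (E^k)^{km} → F such that P(z) = A(z,…,z) for every z ∈ E^k. -/
open scoped BigOperators

section Aux
open Finset

variable {𝕂 : Type*} [RCLike 𝕂] {E F : Type*} [AddCommGroup E] [Module 𝕂 E]
    [AddCommGroup F] [Module 𝕂 F]

lemma supset_sum (m : ℕ) (T : Finset (Fin m)) :
    ∑ S ∈ Finset.univ.filter (fun S : Finset (Fin m) => T ⊆ S),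
      (-1 : 𝕂) ^ (m - S.card) = if T = Finset.univ then 1 else 0 := by
  have key : ∑ U ∈ Tᶜ.powerset, (-1 : 𝕂) ^ U.card = if Tᶜ = ∅ then 1 else 0 := by
    have := Finset.sum_powerset_neg_one_pow_card (x := Tᶜ)
    have h2 := congrArg (fun z : ℤ => (z : 𝕂)) this
    simp only [Int.cast_sum, Int.cast_pow, Int.cast_neg, Int.cast_one, apply_ite
      (fun z : ℤ => (z : 𝕂)), Int.cast_zero] at h2
    exact h2
  have hbij : ∑ S ∈ Finset.univ.filter (fun S : Finset (Fin m) => T ⊆ S),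
      (-1 : 𝕂) ^ (m - S.card) = ∑ U ∈ Tᶜ.powerset, (-1 : 𝕂) ^ (Tᶜ.card - U.card) := by
    refine Finset.sum_nbij' (fun S => S \ T) (fun U => U ∪ T) ?_ ?_ ?_ ?_ ?_
    · intro S hS
      simp only [mem_filter, mem_univ, true_and] at hS
      simp only [Finset.mem_powerset]
      intro x hx
      simp only [Finset.mem_sdiff] at hx
      simp [hx.2]
    · intro U hU
      simp only [mem_filter, mem_univ, true_and]
      exact Finset.subset_union_right
    · intro S hS
      simp only [mem_filter, mem_univ, true_and] at hS
      exact Finset.sdiff_union_of_subset hS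
    · intro U hU
      simp only [Finset.mem_powerset] at hU
      show (U ∪ T) \ T = U
      rw [Finset.union_sdiff_right]
      exact Finset.sdiff_eq_self_of_disjoint (Finset.disjoint_left.2 fun x hx => by
        have := hU hx; simp only [Finset.mem_compl] at this; exact this)
    · intro S hS
      simp only [mem_filter, mem_univ, true_and] at hS
      show (-1 : 𝕂) ^ (m - S.card) = (-1 : 𝕂) ^ (Tᶜ.card - (S \ T).card)
      congr 1
      have h1 : (S \ T).card = S.card - T.card := Finset.card_sdiff_of_subset hS
      have h2 : Tᶜ.card = m - T.card := by
        rw [Finset.card_compl]; simp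
      have hle : T.card ≤ S.card := Finset.card_le_card hS
      have hSm : S.card ≤ m := by
        have := Finset.card_le_univ S; simpa using this
      omega
  rw [hbij]
  have : ∑ U ∈ Tᶜ.powerset, (-1 : 𝕂) ^ (Tᶜ.card - U.card)
      = (-1 : 𝕂) ^ Tᶜ.card * ∑ U ∈ Tᶜ.powerset, (-1 : 𝕂) ^ U.card := by
    rw [Finset.mul_sum]
    refine Finset.sum_congr rfl fun U hU => ?_
    have hle : U.card ≤ Tᶜ.card := Finset.card_le_card (Finset.mem_powerset.1 hU)
    rw [← pow_add]
    have h3 : (-1 : 𝕂) ^ (Tᶜ.card - U.card) * (-1:𝕂) ^ (2 * U.card)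
        = (-1:𝕂) ^ (Tᶜ.card + U.card) := by rw [← pow_add]; congr 1; omega
    rw [pow_mul, neg_one_sq, one_pow, mul_one] at h3
    exact h3
  rw [this, key]
  by_cases h : Tᶜ = ∅
  · simp [h, Finset.card_empty, ← Finset.compl_eq_empty_iff, h]
  · have : T ≠ Finset.univ := by
      intro hT; exact h (by simp [hT])
    simp [h, this]

/-- finite-difference (polarization) operator -/
def Dop (𝕂 : Type*) [RCLike 𝕂] {E F : Type*} [AddCommGroup E] [Module 𝕂 E]
    [AddCommGroup F] [Module 𝕂 F] (m : ℕ) (Q : E → F) (a : Fin m → E) : F :=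
  ∑ S : Finset (Fin m), (-1 : 𝕂) ^ (m - S.card) • Q (∑ i ∈ S, a i)

lemma Dop_repr {m : ℕ} {Q : E → F} (A : MultilinearMap 𝕂 (fun _ : Fin m => E) F)
    (hQ : ∀ x, Q x = A fun _ => x) (a : Fin m → E) :
    Dop 𝕂 m Q a = (∑ σ : Equiv.Perm (Fin m), A.domDomCongr σ) a := by
  classical
  rw [MultilinearMap.sum_apply]
  unfold Dop
  have step1 : ∀ S : Finset (Fin m),
      Q (∑ i ∈ S, a i) = ∑ r ∈ Fintype.piFinset (fun _ : Fin m => S),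
        A (fun i => a (r i)) := by
    intro S
    rw [hQ]
    exact A.map_sum_finset (fun _ j => a j) (fun _ => S)
  simp only [step1, Finset.smul_sum]
  rw [Finset.sum_comm' (s' := fun r : Fin m → Fin m => Finset.univ.filter
      (fun S : Finset (Fin m) => ∀ i, r i ∈ S)) (t' := Finset.univ)
      (fun S r => by simp [Fintype.mem_piFinset])]
  have step2 : ∀ r : Fin m → Fin m,
      ∑ S ∈ Finset.univ.filter (fun S : Finset (Fin m) => ∀ i, r i ∈ S),
        (-1 : 𝕂) ^ (m - S.card) • A (fun i => a (r i))
      = (if Finset.image r Finset.univ = Finset.univ then (1:𝕂) else 0) •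
          A (fun i => a (r i)) := by
    intro r
    rw [← Finset.sum_smul]
    congr 1
    rw [← supset_sum m (Finset.image r Finset.univ)]
    congr 1
    ext S
    simp [Finset.image_subset_iff]
  simp only [step2, ite_smul, one_smul, zero_smul]
  rw [← Finset.sum_filter]
  refine (Finset.sum_nbij (fun σ : Equiv.Perm (Fin m) => (σ : Fin m → Fin m))
    ?_ ?_ ?_ ?_).symm
  · intro σ _
    simp only [Finset.mem_filter, Finset.mem_univ, true_and]
    exact Finset.image_univ_of_surjective σ.surjective
  · intro σ _ τ _ h
    exact Equiv.coe_fn_injective h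
  · intro r hr
    simp only [Finset.coe_filter, Finset.mem_univ, true_and, Set.mem_setOf_eq] at hr
    have hsurj : Function.Surjective r := by
      intro y
      have : y ∈ Finset.image r Finset.univ := by rw [hr]; exact Finset.mem_univ y
      simpa using this
    have hbij : Function.Bijective r := Finite.surjective_iff_bijective.mp hsurj
    exact ⟨Equiv.ofBijective r hbij, by simp, rfl⟩
  · intro σ _
    rfl


lemma Dop_update_add {m : ℕ} {Q : E → F} (hQ : IsHomogPoly 𝕂 m Q)
    (a : Fin m → E) (j : Fin m) (x y : E) :
    Dop 𝕂 m Q (Function.update a j (x + y))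
      = Dop 𝕂 m Q (Function.update a j x) + Dop 𝕂 m Q (Function.update a j y) := by
  obtain ⟨A, hA⟩ := hQ
  rw [Dop_repr A hA, Dop_repr A hA, Dop_repr A hA]
  exact MultilinearMap.map_update_add _ a j x y

lemma Dop_update_smul {m : ℕ} {Q : E → F} (hQ : IsHomogPoly 𝕂 m Q)
    (a : Fin m → E) (j : Fin m) (c : 𝕂) (x : E) :
    Dop 𝕂 m Q (Function.update a j (c • x))
      = c • Dop 𝕂 m Q (Function.update a j x) := by
  obtain ⟨A, hA⟩ := hQ
  rw [Dop_repr A hA, Dop_repr A hA]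
  exact MultilinearMap.map_update_smul _ a j c x

/-- the combinatorial constant: `∑_{T ⊆ Fin m} (-1)^{m-|T|} |T|^m = m!`. -/
lemma Dop_const (m : ℕ) :
    ∑ T : Finset (Fin m), (-1 : 𝕂) ^ (m - T.card) * (T.card : 𝕂) ^ m
      = (m.factorial : 𝕂) := by
  classical
  have hQ : ∀ x : 𝕂, (fun y : 𝕂 => y ^ m) x
      = (MultilinearMap.mkPiAlgebra 𝕂 (Fin m) 𝕂) fun _ => x := by
    intro x
    simp [MultilinearMap.mkPiAlgebra_apply, Finset.prod_const]
  have h := Dop_repr (𝕂 := 𝕂) (MultilinearMap.mkPiAlgebra 𝕂 (Fin m) 𝕂) hQ (fun _ => (1 : 𝕂))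
  unfold Dop at h
  simp only [MultilinearMap.sum_apply, MultilinearMap.domDomCongr_apply,
    MultilinearMap.mkPiAlgebra_apply, Finset.sum_const, Finset.prod_const, one_pow,
    Finset.card_univ, smul_eq_mul, mul_one] at h
  rw [Fintype.card_perm, Fintype.card_fin] at h
  calc ∑ T : Finset (Fin m), (-1 : 𝕂) ^ (m - T.card) * (T.card : 𝕂) ^ m
      = ∑ T : Finset (Fin m), (-1 : 𝕂) ^ (m - T.card) * (∑ _i ∈ T, (1:𝕂)) ^ m := by
        simp
    _ = (m.factorial : 𝕂) := by
        simpa using h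

/-- scaling each coordinate of a multipolynomial scales the value accordingly -/
lemma multiPoly_smul {k m : ℕ} {P : (Fin k → E) → F}
    (hP : IsMultiPoly 𝕂 (fun _ : Fin k => m) P) (c : Fin k → 𝕂) (z : Fin k → E) :
    P (fun j => c j • z j) = (∏ j, c j ^ m) • P z := by
  classical
  suffices H : ∀ s : Finset (Fin k),
      P (fun j => if j ∈ s then c j • z j else z j) = (∏ j ∈ s, c j ^ m) • P z by
    have := H Finset.univ
    simpa using this
  intro s
  induction s using Finset.induction_on with
  | empty => simp
  | @insert j s hj ih =>
    set base : Fin k → E := fun j' => if j' ∈ s then c j' • z j' else z j' with hbase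
    have h1 : (fun j' => if j' ∈ insert j s then c j' • z j' else z j')
        = Function.update base j (c j • z j) := by
      funext j'
      by_cases h : j' = j
      · subst h; simp [Function.update_self, hj]
      · simp [Function.update_of_ne h, hbase, h, Finset.mem_insert]
    have h2 : base = Function.update base j (z j) := by
      funext j'
      by_cases h : j' = j
      · subst h; simp [Function.update_self, hbase, hj]
      · simp [Function.update_of_ne h]
    obtain ⟨A, hA⟩ := hP j base
    simp only at hA
    rw [h1, hA]
    have : (fun _ : Fin m => c j • z j) = fun i : Fin m => c j • ((fun _ => z j) i) := rfl
    rw [this, MultilinearMap.map_smul_univ, ← hA]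
    rw [← h2, ih, Finset.prod_insert hj]
    simp [smul_smul, Finset.prod_const]

end Aux

/-- Every `(k,m)`-linear mapping, i.e. every `(m, …, m)`-homogeneous polynomial
`P : E^k → F` (`m` repeated `k` times), is a `km`-homogeneous polynomial on `E^k`. -/
theorem kmLinear_isHomogPoly {𝕂 : Type*} [RCLike 𝕂] {E F : Type*}
    [AddCommGroup E] [Module 𝕂 E] [AddCommGroup F] [Module 𝕂 F]
    {k m : ℕ} (P : (Fin k → E) → F) (hP : IsMultiPoly 𝕂 (fun _ : Fin k => m) P) :
    ∃ A : MultilinearMap 𝕂 (fun _ : Fin (k * m) => (Fin k → E)) F,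
      ∀ z : Fin k → E, P z = A fun _ => z := by
  classical
  -- the candidate multilinear map, indexed by `Fin k × Fin m`
  let w : (Fin k → Finset (Fin m)) → ((Fin k × Fin m) → (Fin k → E)) → (Fin k → E) :=
    fun S z j => ∑ i ∈ S j, z (j, i) j
  let B0 : ((Fin k × Fin m) → (Fin k → E)) → F :=
    fun z => ∑ S : Fin k → Finset (Fin m),
      ((-1 : 𝕂) ^ (∑ j, (m - (S j).card))) • P (w S z)
  let wbar : (j₀ : Fin k) → ({j : Fin k // j ≠ j₀} → Finset (Fin m)) →
      ((Fin k × Fin m) → (Fin k → E)) → (Fin k → E) :=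
    fun j₀ S' z j => if h : j = j₀ then 0 else ∑ i ∈ S' ⟨j, h⟩, z (j, i) j
  have decomp : ∀ (j₀ : Fin k) (z : (Fin k × Fin m) → (Fin k → E)),
      B0 z = ∑ S' : {j : Fin k // j ≠ j₀} → Finset (Fin m),
        ((-1 : 𝕂) ^ (∑ j' : {j : Fin k // j ≠ j₀}, (m - (S' j').card))) •
          Dop 𝕂 m (fun y => P (Function.update (wbar j₀ S' z) j₀ y))
            (fun i => z (j₀, i) j₀) := by
    intro j₀ z
    have := Equiv.sum_comp (Equiv.funSplitAt j₀ (Finset (Fin m))).symm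
      (fun S : Fin k → Finset (Fin m) =>
        ((-1 : 𝕂) ^ (∑ j, (m - (S j).card))) • P (w S z))
    rw [show B0 z = ∑ S : Fin k → Finset (Fin m),
        ((-1 : 𝕂) ^ (∑ j, (m - (S j).card))) • P (w S z) from rfl, ← this,
      Fintype.sum_prod_type_right]
    unfold Dop
    refine Finset.sum_congr rfl fun S' _ => ?_
    rw [Finset.smul_sum]
    refine Finset.sum_congr rfl fun T _ => ?_
    set S : Fin k → Finset (Fin m) :=
      (Equiv.funSplitAt j₀ (Finset (Fin m))).symm (T, S') with hS
    have hSj₀ : S j₀ = T := by simp [hS]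
    have hSne : ∀ (j : Fin k) (h : j ≠ j₀), S j = S' ⟨j, h⟩ := by
      intro j h; simp [hS, h]
    have hsign : (∑ j, (m - (S j).card))
        = (m - T.card) + ∑ j' : {j : Fin k // j ≠ j₀}, (m - (S' j').card) := by
      rw [Fintype.sum_eq_add_sum_compl j₀]
      congr 1
      · rw [hSj₀]
      · rw [Finset.sum_subtype (p := fun j => j ≠ j₀) ({j₀}ᶜ : Finset (Fin k))
          (fun j => by simp) (fun j => m - (S j).card)]
        exact Finset.sum_congr rfl fun j' _ => by rw [hSne j' j'.2]
    have harg : w S z = Function.update (wbar j₀ S' z) j₀ (∑ i ∈ T, z (j₀, i) j₀) := by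
      funext j
      by_cases h : j = j₀
      · subst h
        rw [Function.update_self]
        show ∑ i ∈ S j, z (j, i) j = ∑ i ∈ T, z (j, i) j
        rw [hSj₀]
      · rw [Function.update_of_ne h]
        show ∑ i ∈ S j, z (j, i) j = wbar j₀ S' z j
        show ∑ i ∈ S j, z (j, i) j = if h' : j = j₀ then 0 else ∑ i ∈ S' ⟨j, h'⟩, z (j, i) j
        rw [dif_neg h, hSne j h]
    rw [harg, hsign, pow_add, mul_comm, mul_smul]
  -- multilinearity of B0
  have hadd : ∀ [DecidableEq (Fin k × Fin m)]
      (z : (Fin k × Fin m) → (Fin k → E)) (p : Fin k × Fin m) (x y : Fin k → E),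
      B0 (Function.update z p (x + y))
        = B0 (Function.update z p x) + B0 (Function.update z p y) := by
    intro _ z p x y
    obtain ⟨j₀, i₀⟩ := p
    rw [decomp j₀, decomp j₀, decomp j₀, ← Finset.sum_add_distrib]
    refine Finset.sum_congr rfl fun S' _ => ?_
    have hbar : ∀ v : Fin k → E, wbar j₀ S' (Function.update z (j₀, i₀) v) = wbar j₀ S' z := by
      intro v
      funext j
      show (if h : j = j₀ then 0 else ∑ i ∈ S' ⟨j, h⟩, Function.update z (j₀, i₀) v (j, i) j)
        = if h : j = j₀ then 0 else ∑ i ∈ S' ⟨j, h⟩, z (j, i) j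
      by_cases h : j = j₀
      · rw [dif_pos h, dif_pos h]
      · rw [dif_neg h, dif_neg h]
        refine Finset.sum_congr rfl fun i _ => ?_
        rw [Function.update_of_ne (by simp [Prod.ext_iff, h])]
    have hslot : ∀ v : Fin k → E,
        (fun i => Function.update z (j₀, i₀) v (j₀, i) j₀)
          = Function.update (fun i => z (j₀, i) j₀) i₀ (v j₀) := by
      intro v
      funext i
      by_cases h : i = i₀
      · subst h; rw [Function.update_self, Function.update_self]
      · rw [Function.update_of_ne h, Function.update_of_ne (by simp [Prod.ext_iff, h])]
    rw [hbar, hbar, hbar, hslot, hslot, hslot]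
    have hQ : IsHomogPoly 𝕂 m (fun y => P (Function.update (wbar j₀ S' z) j₀ y)) :=
      hP j₀ (wbar j₀ S' z)
    rw [show (x + y) j₀ = x j₀ + y j₀ from rfl, Dop_update_add hQ, smul_add]
  have hsmul : ∀ [DecidableEq (Fin k × Fin m)]
      (z : (Fin k × Fin m) → (Fin k → E)) (p : Fin k × Fin m) (c : 𝕂) (x : Fin k → E),
      B0 (Function.update z p (c • x)) = c • B0 (Function.update z p x) := by
    intro _ z p c x
    obtain ⟨j₀, i₀⟩ := p
    rw [decomp j₀, decomp j₀, Finset.smul_sum]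
    refine Finset.sum_congr rfl fun S' _ => ?_
    have hbar : ∀ v : Fin k → E, wbar j₀ S' (Function.update z (j₀, i₀) v) = wbar j₀ S' z := by
      intro v
      funext j
      show (if h : j = j₀ then 0 else ∑ i ∈ S' ⟨j, h⟩, Function.update z (j₀, i₀) v (j, i) j)
        = if h : j = j₀ then 0 else ∑ i ∈ S' ⟨j, h⟩, z (j, i) j
      by_cases h : j = j₀
      · rw [dif_pos h, dif_pos h]
      · rw [dif_neg h, dif_neg h]
        refine Finset.sum_congr rfl fun i _ => ?_
        rw [Function.update_of_ne (by simp [Prod.ext_iff, h])]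
    have hslot : ∀ v : Fin k → E,
        (fun i => Function.update z (j₀, i₀) v (j₀, i) j₀)
          = Function.update (fun i => z (j₀, i) j₀) i₀ (v j₀) := by
      intro v
      funext i
      by_cases h : i = i₀
      · subst h; rw [Function.update_self, Function.update_self]
      · rw [Function.update_of_ne h, Function.update_of_ne (by simp [Prod.ext_iff, h])]
    rw [hbar, hbar, hslot, hslot]
    have hQ : IsHomogPoly 𝕂 m (fun y => P (Function.update (wbar j₀ S' z) j₀ y)) :=
      hP j₀ (wbar j₀ S' z)
    rw [show (c • x) j₀ = c • x j₀ from rfl, Dop_update_smul hQ, smul_comm]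
  let B : MultilinearMap 𝕂 (fun _ : Fin k × Fin m => (Fin k → E)) F :=
    { toFun := B0
      map_update_add' := fun z p x y => hadd z p x y
      map_update_smul' := fun z p c x => hsmul z p c x }
  -- the diagonal value of B
  have hdiag : ∀ z : Fin k → E, B (fun _ => z) = ((m.factorial : 𝕂) ^ k) • P z := by
    intro z
    show B0 (fun _ => z) = ((m.factorial : 𝕂) ^ k) • P z
    have hterm : ∀ S : Fin k → Finset (Fin m),
        ((-1 : 𝕂) ^ (∑ j, (m - (S j).card))) • P (w S (fun _ => z))
          = (∏ j, ((-1 : 𝕂) ^ (m - (S j).card) * ((S j).card : 𝕂) ^ m)) • P z := by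
      intro S
      have h1 : w S (fun _ => z) = fun j => (((S j).card : 𝕂)) • z j := by
        funext j
        show ∑ _i ∈ S j, z j = ((S j).card : 𝕂) • z j
        rw [Finset.sum_const, Nat.cast_smul_eq_nsmul]
      rw [h1, multiPoly_smul hP, Finset.prod_mul_distrib, ← Finset.prod_pow_eq_pow_sum,
        mul_smul]
    rw [show B0 (fun _ => z) = ∑ S : Fin k → Finset (Fin m),
        ((-1 : 𝕂) ^ (∑ j, (m - (S j).card))) • P (w S (fun _ => z)) from rfl]
    simp only [hterm]
    rw [← Finset.sum_smul]
    congr 1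
    have := Finset.prod_univ_sum (fun _ : Fin k => (Finset.univ : Finset (Finset (Fin m))))
      (fun _ T => (-1 : 𝕂) ^ (m - T.card) * ((T.card : 𝕂)) ^ m)
    rw [Fintype.piFinset_univ] at this
    rw [← this]
    rw [Finset.prod_congr rfl fun j _ => Dop_const (𝕂 := 𝕂) m, Finset.prod_const,
      Finset.card_univ, Fintype.card_fin]
  -- normalize and transfer the index type
  have hc : ((m.factorial : 𝕂) ^ k) ≠ 0 :=
    pow_ne_zero _ (Nat.cast_ne_zero.2 (Nat.factorial_ne_zero m))
  refine ⟨(((m.factorial : 𝕂) ^ k)⁻¹ • B).domDomCongr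
    (finProdFinEquiv : Fin k × Fin m ≃ Fin (k * m)), fun z => ?_⟩
  rw [MultilinearMap.domDomCongr_apply]
  show P z = (((m.factorial : 𝕂) ^ k)⁻¹ • B) (fun _ => z)
  rw [MultilinearMap.smul_apply, hdiag, smul_smul, inv_mul_cancel₀ hc, one_smul]
end

section
/- Let P : E^m → F be an (n,…,n)-homogeneous polynomial (n repeated m times). Then for all x₁,…,x_d ∈ E and λ₁,…,λ_d ∈ 𝕂: P(Σ_{j=1}^d λ_j x_j)^m = 2^{−mn} Σ_{(α_{ij})} Σ_{ε∈{±1}^{mn}} (λ₁^{|α_{·1}|} ⋯ λ_d^{|α_{·d}|} / (α₁!⋯α_m!)) · ε₁⋯ε_{mn} · P(Σ_{j=1}^d ε_{1j} x_j, …, Σ_{j=1}^d ε_{mj} x_j), where the outer sum is over all matrices (α_{ij}) ∈ M_{m×d}(ℕ₀) whose every row sum equals n, and |α_{·j}| = Σ_{i=1}^m α_{ij} denotes the j-th column sum. -/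
open scoped BigOperators

/-- The sign `ε_t ∈ {±1}` at position `t ∈ {0, …, N-1}` (as an integer; `0` out of range). -/
def signAt {N : ℕ} (ε : Fin N → ℤˣ) (t : ℕ) : ℤ :=
  if h : t < N then (ε ⟨t, h⟩ : ℤ) else 0

/-- `ε_{ij} = ∑_{k=1}^{α_{ij}} ε_{(i-1)n + α_{i1} + ⋯ + α_{i,j-1} + k}` (and `ε_{ij} = 0`
when `α_{ij} = 0`). -/
def epsSum {m d : ℕ} (n : ℕ) (ε : Fin (m * n) → ℤˣ) (α : Fin m → Fin d → ℕ)
    (i : Fin m) (j : Fin d) : ℤ :=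
  ∑ t ∈ Finset.range (α i j),
    signAt ε ((i : ℕ) * n + (∑ j' ∈ Finset.univ.filter (fun j' => j' < j), α i j') + t)

open Finset




namespace MLP

variable {n d : ℕ}

def offs (β : Fin d → ℕ) (j : Fin d) : ℕ :=
  ∑ j' ∈ Finset.univ.filter (fun j' => j' < j), β j'

lemma offs_add_le (β : Fin d → ℕ) (j : Fin d) : offs β j + β j ≤ ∑ j', β j' := by
  have hj : j ∉ Finset.univ.filter (fun j' => j' < j) := by simp
  calc offs β j + β j = ∑ j' ∈ insert j (Finset.univ.filter (fun j' => j' < j)), β j' := by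
        rw [Finset.sum_insert hj, add_comm]; rfl
    _ ≤ ∑ j', β j' := Finset.sum_le_sum_of_subset (Finset.subset_univ _)

lemma offs_le_offs (β : Fin d → ℕ) {j j' : Fin d} (h : j < j') : offs β j + β j ≤ offs β j' := by
  have hj : j ∉ Finset.univ.filter (fun j'' => j'' < j) := by simp
  have hsub : insert j (Finset.univ.filter (fun j'' => j'' < j)) ⊆
      Finset.univ.filter (fun j'' => j'' < j') := by
    intro a ha
    simp only [Finset.mem_insert, Finset.mem_filter, Finset.mem_univ, true_and] at ha ⊢
    rcases ha with rfl | ha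
    · exact h
    · exact lt_trans ha h
  calc offs β j + β j = ∑ j'' ∈ insert j (Finset.univ.filter (fun j'' => j'' < j)), β j'' := by
        rw [Finset.sum_insert hj, add_comm]; rfl
    _ ≤ offs β j' := Finset.sum_le_sum_of_subset hsub

noncomputable def blkEquiv (β : Fin d → ℕ) (hβ : ∑ j, β j = n) : (Σ j : Fin d, Fin (β j)) ≃ Fin n :=
  Equiv.ofBijective
    (fun p => ⟨offs β p.1 + p.2.1, lt_of_lt_of_le
      (by have := p.2.2; omega) (le_of_eq (by rw [← hβ]) |>.trans' (offs_add_le β p.1))⟩)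
    (by
      rw [Fintype.bijective_iff_injective_and_card]
      constructor
      · rintro ⟨j, s⟩ ⟨j', s'⟩ hp
        simp only [Fin.mk.injEq] at hp
        rcases lt_trichotomy j j' with hlt | rfl | hlt
        · have h1 := offs_le_offs β hlt
          have := s.2; omega
        · have : (s : ℕ) = s' := by omega
          exact congrArg _ (Fin.ext this)
        · have h1 := offs_le_offs β hlt
          have := s'.2; omega
      · simp [hβ])

lemma blkEquiv_apply (β : Fin d → ℕ) (hβ : ∑ j, β j = n) (p : Σ j : Fin d, Fin (β j)) :
    (blkEquiv β hβ p : ℕ) = offs β p.1 + p.2.1 := rfl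

noncomputable def blk (β : Fin d → ℕ) (hβ : ∑ j, β j = n) (t : Fin n) : Fin d :=
  ((blkEquiv β hβ).symm t).1

lemma blk_apply (β : Fin d → ℕ) (hβ : ∑ j, β j = n) (p : Σ j : Fin d, Fin (β j)) :
    blk β hβ (blkEquiv β hβ p) = p.1 := by
  unfold blk; rw [Equiv.symm_apply_apply]

variable {𝕂 : Type*} [RCLike 𝕂] {E : Type*} [AddCommGroup E] [Module 𝕂 E]

lemma key1 (β : Fin d → ℕ) (hβ : ∑ j, β j = n) (δ : Fin n → ℤˣ) (x : Fin d → E) :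
    ∑ j, (∑ t ∈ Finset.range (β j), signAt δ (offs β j + t)) • x j
      = ∑ t : Fin n, (δ t : ℤ) • x (blk β hβ t) := by
  rw [← Equiv.sum_comp (blkEquiv β hβ) (fun t => (δ t : ℤ) • x (blk β hβ t))]
  rw [← Finset.univ_sigma_univ, Finset.sum_sigma]
  refine Finset.sum_congr rfl fun j _ => ?_
  have : ∀ s : Fin (β j), blk β hβ (blkEquiv β hβ ⟨j, s⟩) = j := fun s => blk_apply β hβ ⟨j, s⟩
  simp_rw [this]
  rw [← Finset.sum_smul]
  congr 1
  rw [← Fin.sum_univ_eq_sum_range (fun t => signAt δ (offs β j + t)) (β j)]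
  refine Finset.sum_congr rfl fun s _ => ?_
  have hn : ∑ j', β j' = n := hβ
  have hlt : offs β j + (s : ℕ) < n := by
    have h1 := offs_add_le β j
    have := s.2; omega
  rw [signAt, dif_pos hlt]
  rfl

lemma key2 (β : Fin d → ℕ) (hβ : ∑ j, β j = n) (j : Fin d) :
    #(Finset.univ.filter fun t : Fin n => blk β hβ t = j) = β j := by
  rw [Finset.card_filter]
  rw [← Equiv.sum_comp (blkEquiv β hβ) (fun t => if blk β hβ t = j then 1 else 0)]
  rw [← Finset.univ_sigma_univ, Finset.sum_sigma]
  have h2 : ∀ j' : Fin d,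
      (∑ s : Fin (β j'), if blk β hβ (blkEquiv β hβ ⟨j', s⟩) = j then (1:ℕ) else 0)
        = if j' = j then β j' else 0 := by
    intro j'
    rw [show (∑ s : Fin (β j'), if blk β hβ (blkEquiv β hβ ⟨j', s⟩) = j then (1:ℕ) else 0)
        = ∑ _s : Fin (β j'), if j' = j then (1:ℕ) else 0 from
      Finset.sum_congr rfl fun s _ => by rw [blk_apply β hβ ⟨j', s⟩]]
    split <;> simp
  rw [Finset.sum_congr rfl fun j' _ => h2 j', Finset.sum_ite_eq' Finset.univ j (fun j' => β j')]
  simp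



lemma prod_comp_univ {ι κ M : Type*} [Fintype ι] [Fintype κ] [DecidableEq κ] [CommMonoid M]
    (f : κ → M) (g : ι → κ) :
    ∏ a : ι, f (g a) = ∏ b : κ, f b ^ #(Finset.univ.filter fun a => g a = b) := by
  rw [Finset.prod_comp]
  refine Finset.prod_subset (Finset.subset_univ _) fun b _ hb => ?_
  have : Finset.univ.filter (fun a => g a = b) = ∅ := by
    ext a
    simp only [Finset.mem_filter, Finset.mem_univ, true_and, Finset.notMem_empty, iff_false]
    intro h
    exact hb (Finset.mem_image.mpr ⟨a, Finset.mem_univ a, h⟩)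
  rw [this]
  simp

variable {𝕂 : Type*} [RCLike 𝕂]

lemma sum_units_pow (e : ℕ) :
    ∑ u : ℤˣ, ((u : ℤ) : 𝕂) ^ e = if Even e then 2 else 0 := by
  rw [show (Finset.univ : Finset ℤˣ) = {1, -1} from rfl]
  rw [Finset.sum_insert (by decide), Finset.sum_singleton]
  simp only [Units.val_one, Int.cast_one, one_pow, Units.val_neg, Int.cast_neg]
  by_cases he : Even e
  · rw [if_pos he, he.neg_one_pow]; norm_num
  · rw [if_neg he, (Nat.not_even_iff_odd.mp he).neg_one_pow]; norm_num

variable {E F : Type*} [AddCommGroup E] [Module 𝕂 E] [AddCommGroup F] [Module 𝕂 F] {n : ℕ}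

lemma polar (A : MultilinearMap 𝕂 (fun _ : Fin n => E) F) (z : Fin n → E) :
    ∑ δ : Fin n → ℤˣ, (∏ t : Fin n, ((δ t : ℤ) : 𝕂)) • A (fun _ => ∑ t : Fin n, (δ t : ℤ) • z t)
      = (2 ^ n : 𝕂) • ∑ g ∈ Finset.univ.filter fun g : Fin n → Fin n => Function.Bijective g,
          A (fun i => z (g i)) := by
  have hA : ∀ δ : Fin n → ℤˣ, A (fun _ => ∑ t : Fin n, (δ t : ℤ) • z t)
      = ∑ g : Fin n → Fin n, (∏ i : Fin n, ((δ (g i) : ℤ) : 𝕂)) • A (fun i => z (g i)) := by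
    intro δ
    have h1 : (fun _ : Fin n => ∑ t : Fin n, (δ t : ℤ) • z t)
        = fun _ : Fin n => ∑ t : Fin n, ((δ t : ℤ) : 𝕂) • z t := by
      funext i; exact Finset.sum_congr rfl fun t _ => (Int.cast_smul_eq_zsmul 𝕂 _ _).symm
    rw [h1, A.map_sum (fun _ t => ((δ t : ℤ) : 𝕂) • z t)]
    exact Finset.sum_congr rfl fun g _ => A.map_smul_univ _ _
  calc ∑ δ : Fin n → ℤˣ, (∏ t : Fin n, ((δ t : ℤ) : 𝕂)) •
          A (fun _ => ∑ t : Fin n, (δ t : ℤ) • z t)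
      = ∑ δ : Fin n → ℤˣ, ∑ g : Fin n → Fin n,
          ((∏ t : Fin n, ((δ t : ℤ) : 𝕂)) * ∏ i : Fin n, ((δ (g i) : ℤ) : 𝕂)) •
            A (fun i => z (g i)) := by
        refine Finset.sum_congr rfl fun δ _ => ?_
        rw [hA δ, Finset.smul_sum]
        exact Finset.sum_congr rfl fun g _ => (smul_smul _ _ _)
    _ = ∑ g : Fin n → Fin n,
          (∑ δ : Fin n → ℤˣ, (∏ t : Fin n, ((δ t : ℤ) : 𝕂)) * ∏ i : Fin n, ((δ (g i) : ℤ) : 𝕂)) •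
            A (fun i => z (g i)) := by
        rw [Finset.sum_comm]
        exact Finset.sum_congr rfl fun g _ => (Finset.sum_smul).symm
    _ = ∑ g : Fin n → Fin n,
          (if Function.Bijective g then (2 ^ n : 𝕂) else 0) • A (fun i => z (g i)) := by
        refine Finset.sum_congr rfl fun g _ => ?_
        congr 1
        have hcoef : ∀ δ : Fin n → ℤˣ,
            (∏ t : Fin n, ((δ t : ℤ) : 𝕂)) * ∏ i : Fin n, ((δ (g i) : ℤ) : 𝕂)
            = ∏ t : Fin n, ((δ t : ℤ) : 𝕂) ^ (#(Finset.univ.filter fun a => g a = t) + 1) := by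
          intro δ
          rw [prod_comp_univ (fun t => ((δ t : ℤ) : 𝕂)) g]
          rw [← Finset.prod_mul_distrib]
          exact Finset.prod_congr rfl fun t _ => by rw [pow_succ, mul_comm]
        simp_rw [hcoef]
        rw [← Fintype.piFinset_univ, ← Finset.prod_univ_sum (fun _ => (Finset.univ : Finset ℤˣ))
          (fun t u => ((u : ℤ) : 𝕂) ^ (#(Finset.univ.filter fun a => g a = t) + 1))]
        have hfac : ∀ t : Fin n, (∑ u : ℤˣ, ((u : ℤ) : 𝕂) ^ (#(Finset.univ.filter fun a => g a = t) + 1))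
            = if Even (#(Finset.univ.filter fun a => g a = t) + 1) then (2:𝕂) else 0 :=
          fun t => sum_units_pow _
        rw [Finset.prod_congr rfl fun t _ => hfac t]
        by_cases hg : Function.Bijective g
        · rw [if_pos hg]
          have e := Equiv.ofBijective g hg
          have hfib : ∀ t : Fin n, #(Finset.univ.filter fun a => g a = t) = 1 := by
            intro t
            rw [Finset.card_eq_one]
            refine ⟨(Equiv.ofBijective g hg).symm t, ?_⟩
            ext a
            simp only [Finset.mem_filter, Finset.mem_univ, true_and, Finset.mem_singleton]
            rw [← Equiv.ofBijective_apply g hg a, ← Equiv.eq_symm_apply]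
          simp_rw [hfib]
          norm_num
        · rw [if_neg hg]
          have hex : ∃ t : Fin n, ¬ Even (#(Finset.univ.filter fun a => g a = t) + 1) := by
            by_contra hco
            push_neg at hco
            have hodd : ∀ t : Fin n, 1 ≤ #(Finset.univ.filter fun a => g a = t) := by
              intro t
              have := hco t
              rw [Nat.even_add_one] at this
              rcases Nat.eq_zero_or_pos #(Finset.univ.filter fun a => g a = t) with h0 | h1
              · rw [h0] at this; exact absurd this (by simp)
              · exact h1
            have hsum : ∑ t : Fin n, #(Finset.univ.filter fun a => g a = t) = n := by
              rw [← Finset.card_eq_sum_card_fiberwise (fun a _ => Finset.mem_univ (g a))]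
              simp
            have hone : ∀ t : Fin n, #(Finset.univ.filter fun a => g a = t) = 1 := by
              have h2 : (∑ t : Fin n, (1:ℕ)) = ∑ t : Fin n, #(Finset.univ.filter fun a => g a = t) := by
                rw [hsum]; simp
              intro t
              exact ((Finset.sum_eq_sum_iff_of_le fun i _ => hodd i).mp h2 t (Finset.mem_univ t)).symm
            have hinj : Function.Injective g := by
              intro a b hab
              have h1 : a ∈ Finset.univ.filter fun a' => g a' = g b := by simp [hab]
              have h2 : b ∈ Finset.univ.filter fun a' => g a' = g b := by simp
              exact Finset.card_le_one.mp (le_of_eq (hone (g b))) a h1 b h2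
            exact hg ((Finite.injective_iff_bijective).mp hinj)
          obtain ⟨t0, ht0⟩ := hex
          exact Finset.prod_eq_zero (Finset.mem_univ t0) (if_neg ht0)
    _ = (2 ^ n : 𝕂) • ∑ g ∈ Finset.univ.filter fun g : Fin n → Fin n => Function.Bijective g,
          A (fun i => z (g i)) := by
        rw [Finset.smul_sum, Finset.sum_filter]
        refine Finset.sum_congr rfl fun g _ => ?_
        split
        · rfl
        · rw [zero_smul]


variable {n d : ℕ}

section FE
variable {b r : Fin n → Fin d} (e : ∀ j : Fin d, {t : Fin n // r t = j} ≃ {t : Fin n // b t = j})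

lemma eaux {j : Fin d} (u : Fin n) (hu : r u = j) :
    ((e (r u)) ⟨u, rfl⟩ : Fin n) = ((e j) ⟨u, hu⟩ : Fin n) := by subst hu; rfl

lemma eaux' {j : Fin d} (u : Fin n) (hu : b u = j) :
    (((e (b u)).symm ⟨u, rfl⟩ : _) : Fin n) = (((e j).symm ⟨u, hu⟩ : _) : Fin n) := by
  subst hu; rfl

/-- glue a family of fiber bijections into a function `Fin n → Fin n`. -/
def σfun (t : Fin n) : Fin n := ((e (r t)) ⟨t, rfl⟩ : Fin n)

def τfun (t : Fin n) : Fin n := (((e (b t)).symm ⟨t, rfl⟩ : _) : Fin n)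

lemma hbσ (t : Fin n) : b (σfun e t) = r t := ((e (r t)) ⟨t, rfl⟩).2

lemma hrτ (t : Fin n) : r (τfun e t) = b t := (((e (b t)).symm ⟨t, rfl⟩ : _)).2

lemma τσ (t : Fin n) : τfun e (σfun e t) = t := by
  have hu : b (σfun e t) = r t := hbσ e t
  show (((e (b (σfun e t))).symm ⟨σfun e t, rfl⟩ : _) : Fin n) = t
  rw [eaux' e (σfun e t) hu]
  have h2 : (⟨σfun e t, hu⟩ : {t' : Fin n // b t' = r t}) = (e (r t)) ⟨t, rfl⟩ :=
    Subtype.ext rfl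
  rw [h2, Equiv.symm_apply_apply]

lemma στ (t : Fin n) : σfun e (τfun e t) = t := by
  have hu : r (τfun e t) = b t := hrτ e t
  show ((e (r (τfun e t))) ⟨τfun e t, rfl⟩ : Fin n) = t
  rw [eaux e (τfun e t) hu]
  have h2 : (⟨τfun e t, hu⟩ : {t' : Fin n // r t' = b t}) = (e (b t)).symm ⟨t, rfl⟩ :=
    Subtype.ext rfl
  rw [h2, Equiv.apply_symm_apply]

end FE

/-- the bijections `g` with `b ∘ g = r` correspond to families of bijections between fibers. -/
noncomputable def fiberEquiv (b r : Fin n → Fin d) :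
    {g : Fin n → Fin n // Function.Bijective g ∧ b ∘ g = r} ≃
      ∀ j : Fin d, ({t : Fin n // r t = j} ≃ {t : Fin n // b t = j}) where
  toFun g j :=
    { toFun := fun t => ⟨g.1 t.1, by rw [show b (g.1 t.1) = r t.1 from congrFun g.2.2 t.1, t.2]⟩
      invFun := fun t => ⟨(Equiv.ofBijective g.1 g.2.1).symm t.1, by
        have h1 : b (g.1 ((Equiv.ofBijective g.1 g.2.1).symm t.1))
            = r ((Equiv.ofBijective g.1 g.2.1).symm t.1) := congrFun g.2.2 _
        have h2 : g.1 ((Equiv.ofBijective g.1 g.2.1).symm t.1) = t.1 :=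
          (Equiv.ofBijective g.1 g.2.1).apply_symm_apply t.1
        rw [h2] at h1
        rw [← h1, t.2]⟩
      left_inv := fun t => Subtype.ext ((Equiv.ofBijective g.1 g.2.1).symm_apply_apply t.1)
      right_inv := fun t => Subtype.ext ((Equiv.ofBijective g.1 g.2.1).apply_symm_apply t.1) }
  invFun e :=
    ⟨σfun e, (Equiv.mk (σfun e) (τfun e) (τσ e) (στ e)).bijective, funext fun t => hbσ e t⟩
  left_inv g := Subtype.ext (funext fun t => rfl)
  right_inv e := by
    funext j
    apply Equiv.ext
    intro t
    apply Subtype.ext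
    show σfun e t.1 = ((e j) t : Fin n)
    unfold σfun
    rw [eaux e t.1 t.2]

lemma card_equiv_fibers (b r : Fin n → Fin d) (j : Fin d) :
    Fintype.card ({t : Fin n // r t = j} ≃ {t : Fin n // b t = j})
      = if #(Finset.univ.filter fun t => r t = j) = #(Finset.univ.filter fun t => b t = j)
        then (#(Finset.univ.filter fun t => b t = j)).factorial else 0 := by
  by_cases h : #(Finset.univ.filter fun t => r t = j) = #(Finset.univ.filter fun t => b t = j)
  · rw [if_pos h]
    have hcard : Fintype.card {t : Fin n // r t = j} = Fintype.card {t : Fin n // b t = j} := by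
      rw [Fintype.card_subtype, Fintype.card_subtype]; exact h
    rw [Fintype.card_equiv (Fintype.equivOfCardEq hcard), Fintype.card_subtype, h]
  · rw [if_neg h]
    rw [Fintype.card_eq_zero_iff]
    refine ⟨fun e => h ?_⟩
    rw [← Fintype.card_subtype, ← Fintype.card_subtype]
    exact Fintype.card_congr e

lemma count_perm (b r : Fin n → Fin d) :
    #(Finset.univ.filter fun g : Fin n → Fin n => Function.Bijective g ∧ b ∘ g = r)
      = if (∀ j, #(Finset.univ.filter fun t => r t = j) = #(Finset.univ.filter fun t => b t = j))
        then ∏ j, (#(Finset.univ.filter fun t => b t = j)).factorial else 0 := by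
  rw [← Fintype.card_subtype]
  rw [Fintype.card_congr (fiberEquiv b r), Fintype.card_pi]
  by_cases hall : ∀ j, #(Finset.univ.filter fun t => r t = j) = #(Finset.univ.filter fun t => b t = j)
  · rw [if_pos hall]
    exact Finset.prod_congr rfl fun j _ => by rw [card_equiv_fibers, if_pos (hall j)]
  · rw [if_neg hall]
    push_neg at hall
    obtain ⟨j0, hj0⟩ := hall
    exact Finset.prod_eq_zero (Finset.mem_univ j0) (by rw [card_equiv_fibers, if_neg hj0])


section LemA
variable {𝕂 : Type*} [RCLike 𝕂] {E F : Type*} [AddCommGroup E] [Module 𝕂 E]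
  [AddCommGroup F] [Module 𝕂 F] {n d : ℕ}

lemma lemA (Q : E → F) (hQ : IsHomogPoly 𝕂 n Q) (x : Fin d → E) (lam : Fin d → 𝕂) :
    Q (∑ j : Fin d, lam j • x j) =
      (2 ^ n : 𝕂)⁻¹ • ∑ β ∈ Finset.Nat.antidiagonalTuple d n, ∑ δ : Fin n → ℤˣ,
        ((∏ j : Fin d, lam j ^ β j) / ((∏ j : Fin d, (β j).factorial : ℕ) : 𝕂)) •
          (∏ k : Fin n, (δ k : ℤ)) •
            Q (∑ j : Fin d, (∑ t ∈ Finset.range (β j), signAt δ (offs β j + t)) • x j) := by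
  obtain ⟨A, hA⟩ := hQ
  have h2n : (2 ^ n : 𝕂) ≠ 0 := pow_ne_zero _ two_ne_zero
  have key : ∀ β : Fin d → ℕ, (hβ : ∑ j, β j = n) →
      (∑ δ : Fin n → ℤˣ,
        ((∏ j : Fin d, lam j ^ β j) / ((∏ j : Fin d, (β j).factorial : ℕ) : 𝕂)) •
          (∏ k : Fin n, (δ k : ℤ)) •
            Q (∑ j : Fin d, (∑ t ∈ Finset.range (β j), signAt δ (offs β j + t)) • x j))
      = (2 ^ n : 𝕂) • ∑ r : Fin n → Fin d,
          ((∏ j : Fin d, lam j ^ β j) / ((∏ j : Fin d, (β j).factorial : ℕ) : 𝕂)) •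
            ((if ∀ j, #(Finset.univ.filter fun t => r t = j) = β j
                then (∏ j, (β j).factorial) else 0) • A (fun i => x (r i))) := by
    intro β hβ
    have hQz : ∀ δ : Fin n → ℤˣ,
        Q (∑ j : Fin d, (∑ t ∈ Finset.range (β j), signAt δ (offs β j + t)) • x j)
        = A (fun _ => ∑ t : Fin n, (δ t : ℤ) • x (blk β hβ t)) := by
      intro δ
      rw [hA]
      exact congrArg _ (funext fun _ => key1 β hβ δ x)
    have hsg : ∀ (δ : Fin n → ℤˣ) (w : F),
        (∏ k : Fin n, (δ k : ℤ)) • w = (∏ k : Fin n, ((δ k : ℤ) : 𝕂)) • w := by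
      intro δ w
      rw [show (∏ k : Fin n, ((δ k : ℤ) : 𝕂)) = ((∏ k : Fin n, (δ k : ℤ) : ℤ) : 𝕂) by push_cast; rfl,
        Int.cast_smul_eq_zsmul]
    have hfib : ∑ g ∈ Finset.univ.filter (fun g : Fin n → Fin n => Function.Bijective g),
        A (fun i => x (blk β hβ (g i)))
        = ∑ r : Fin n → Fin d,
            (if ∀ j, #(Finset.univ.filter fun t => r t = j) = β j
              then (∏ j, (β j).factorial) else 0) • A (fun i => x (r i)) := by
      rw [← Finset.sum_fiberwise_of_maps_to (g := fun g : Fin n → Fin n => blk β hβ ∘ g)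
        (t := (Finset.univ : Finset (Fin n → Fin d))) (fun g _ => Finset.mem_univ _)
        (fun g => A fun i => x (blk β hβ (g i)))]
      refine Finset.sum_congr rfl fun r _ => ?_
      have h1 : ∀ g ∈ (Finset.univ.filter fun g : Fin n → Fin n =>
          Function.Bijective g).filter (fun g => blk β hβ ∘ g = r),
          (A fun i => x (blk β hβ (g i))) = A fun i => x (r i) := by
        intro g hg
        rw [Finset.mem_filter] at hg
        exact congrArg _ (funext fun i => by
          rw [show blk β hβ (g i) = r i from congrFun hg.2 i])
      rw [Finset.sum_congr rfl h1, Finset.sum_const, Finset.filter_filter,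
        count_perm (blk β hβ) r]
      congr 2
      · simp only [key2 β hβ]
      · exact Finset.prod_congr rfl fun j _ => by rw [key2 β hβ]
    simp only [hQz, hsg]
    rw [← Finset.smul_sum, polar A (fun t => x (blk β hβ t)), hfib,
      smul_comm _ ((2:𝕂) ^ n), Finset.smul_sum]
  symm
  calc (2 ^ n : 𝕂)⁻¹ • ∑ β ∈ Finset.Nat.antidiagonalTuple d n, ∑ δ : Fin n → ℤˣ,
        ((∏ j : Fin d, lam j ^ β j) / ((∏ j : Fin d, (β j).factorial : ℕ) : 𝕂)) •
          (∏ k : Fin n, (δ k : ℤ)) •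
            Q (∑ j : Fin d, (∑ t ∈ Finset.range (β j), signAt δ (offs β j + t)) • x j)
      = (2 ^ n : 𝕂)⁻¹ • ∑ β ∈ Finset.Nat.antidiagonalTuple d n, (2 ^ n : 𝕂) •
          ∑ r : Fin n → Fin d,
            ((∏ j : Fin d, lam j ^ β j) / ((∏ j : Fin d, (β j).factorial : ℕ) : 𝕂)) •
              ((if ∀ j, #(Finset.univ.filter fun t => r t = j) = β j
                  then (∏ j, (β j).factorial) else 0) • A (fun i => x (r i))) := by
        congr 1
        exact Finset.sum_congr rfl fun β hβm =>
          key β (Finset.Nat.mem_antidiagonalTuple.mp hβm)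
    _ = ∑ β ∈ Finset.Nat.antidiagonalTuple d n, ∑ r : Fin n → Fin d,
            ((∏ j : Fin d, lam j ^ β j) / ((∏ j : Fin d, (β j).factorial : ℕ) : 𝕂)) •
              ((if ∀ j, #(Finset.univ.filter fun t => r t = j) = β j
                  then (∏ j, (β j).factorial) else 0) • A (fun i => x (r i))) := by
        rw [← Finset.smul_sum, inv_smul_smul₀ h2n]
    _ = ∑ r : Fin n → Fin d, ∑ β ∈ Finset.Nat.antidiagonalTuple d n,
            ((∏ j : Fin d, lam j ^ β j) / ((∏ j : Fin d, (β j).factorial : ℕ) : 𝕂)) •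
              ((if ∀ j, #(Finset.univ.filter fun t => r t = j) = β j
                  then (∏ j, (β j).factorial) else 0) • A (fun i => x (r i))) :=
        Finset.sum_comm
    _ = ∑ r : Fin n → Fin d,
          (∏ j : Fin d, lam j ^ (#(Finset.univ.filter fun t => r t = j))) •
            A (fun i => x (r i)) := by
        refine Finset.sum_congr rfl fun r _ => ?_
        have hγ : (fun j => #(Finset.univ.filter fun t => r t = j)) ∈
            Finset.Nat.antidiagonalTuple d n := by
          rw [Finset.Nat.mem_antidiagonalTuple]
          rw [← Finset.card_eq_sum_card_fiberwise (fun t _ => Finset.mem_univ (r t))]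
          simp
        rw [Finset.sum_eq_single (fun j => #(Finset.univ.filter fun t => r t = j))]
        · rw [if_pos (fun j => rfl), ← Nat.cast_smul_eq_nsmul 𝕂, smul_smul,
            div_mul_cancel₀]
          exact Nat.cast_ne_zero.mpr (Finset.prod_ne_zero_iff.mpr
            fun j _ => (Nat.factorial_ne_zero _))
        · intro β _ hne
          rw [if_neg (fun h => hne (funext fun j => (h j).symm)), zero_smul, smul_zero]
        · intro h
          exact absurd hγ h
    _ = Q (∑ j : Fin d, lam j • x j) := by
        rw [hA, A.map_sum (fun _ j => lam j • x j)]
        refine (Finset.sum_congr rfl fun r _ => ?_).symm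
        rw [A.map_smul_univ (fun i => lam (r i)) (fun i => x (r i)),
          prod_comp_univ lam r]

end LemA


def swapB (n k : ℕ) {N : ℕ} (ε : Fin N → ℤˣ) (δ : Fin n → ℤˣ) : Fin N → ℤˣ :=
  fun t => if h : k*n ≤ (t:ℕ) ∧ (t:ℕ) < k*n + n then δ ⟨(t:ℕ) - k*n, by omega⟩ else ε t

def getB (n k : ℕ) {N : ℕ} (h : k*n + n ≤ N) (ε : Fin N → ℤˣ) : Fin n → ℤˣ :=
  fun u => ε ⟨k*n + (u:ℕ), by have := u.2; omega⟩

lemma swap_invol (n k : ℕ) {N : ℕ} (h : k*n + n ≤ N) :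
    Function.Involutive (fun p : (Fin N → ℤˣ) × (Fin n → ℤˣ) =>
      (swapB n k p.1 p.2, getB n k h p.1)) := by
  rintro ⟨ε, δ⟩
  simp only [Prod.mk.injEq]
  constructor
  · funext t
    show (if hb : k*n ≤ (t:ℕ) ∧ (t:ℕ) < k*n + n
        then getB n k h ε ⟨(t:ℕ) - k*n, by omega⟩ else swapB n k ε δ t) = ε t
    by_cases hb : k*n ≤ (t:ℕ) ∧ (t:ℕ) < k*n + n
    · rw [dif_pos hb]
      show ε _ = ε t
      congr 1
      exact Fin.ext (by simp only []; omega)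
    · rw [dif_neg hb]
      show (if hb' : k*n ≤ (t:ℕ) ∧ (t:ℕ) < k*n + n then _ else ε t) = ε t
      rw [dif_neg hb]
  · funext u
    show swapB n k ε δ ⟨k*n + (u:ℕ), by have := u.2; omega⟩ = δ u
    have hb : k*n ≤ k*n + (u:ℕ) ∧ k*n + (u:ℕ) < k*n + n := ⟨Nat.le_add_right _ _, by have := u.2; omega⟩
    show (if h' : k*n ≤ (k*n + (u:ℕ)) ∧ (k*n + (u:ℕ)) < k*n + n
        then δ ⟨(k*n + (u:ℕ)) - k*n, by omega⟩ else ε _) = δ u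
    rw [dif_pos hb]
    congr 1
    exact Fin.ext (by simp only []; omega)

section Main
variable {𝕂 : Type*} [RCLike 𝕂] {E F : Type*} [AddCommGroup E] [Module 𝕂 E]
  [AddCommGroup F] [Module 𝕂 F]

variable {m n d : ℕ}

def Cf (lam : Fin d → 𝕂) (α : Fin m → Fin d → ℕ) : 𝕂 :=
  (∏ j : Fin d, lam j ^ (∑ i : Fin m, α i j)) /
    ((∏ i : Fin m, ∏ j : Fin d, (α i j).factorial : ℕ) : 𝕂)

def cf (lam : Fin d → 𝕂) (β : Fin d → ℕ) : 𝕂 :=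
  (∏ j : Fin d, lam j ^ β j) / ((∏ j : Fin d, (β j).factorial : ℕ) : 𝕂)

def Sg (k : ℕ) {N : ℕ} (ε : Fin N → ℤˣ) : ℤ :=
  ∏ t ∈ Finset.univ.filter (fun t : Fin N => (t:ℕ) < k), (ε t : ℤ)

def gA (n k : ℕ) (s : E) (x : Fin d → E) (ε : Fin (m*n) → ℤˣ) (α : Fin m → Fin d → ℕ) :
    Fin m → E :=
  fun i => if (i:ℕ) < k then ∑ j : Fin d, epsSum n ε α i j • x j else s

def piK (m d n k : ℕ) : Finset (Fin m → Fin d → ℕ) :=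
  Fintype.piFinset (fun i : Fin m =>
    if (i:ℕ) < k then Finset.Nat.antidiagonalTuple d n else {fun _ => 0})

set_option maxHeartbeats 2000000 in
lemma step (P : (Fin m → E) → F) (hP : IsMultiPoly 𝕂 (fun _ : Fin m => n) P)
    (x : Fin d → E) (lam : Fin d → 𝕂) (k : ℕ) : k ≤ m →
    P (fun _ => ∑ j : Fin d, lam j • x j) =
      (2 ^ (m * n) : 𝕂)⁻¹ •
        ∑ α ∈ piK m d n k, ∑ ε : Fin (m * n) → ℤˣ,
          Cf lam α • Sg (k*n) ε • P (gA n k (∑ j : Fin d, lam j • x j) x ε α) := by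
  induction k with
  | zero =>
    intro _
    have hpi : piK m d n 0 = {fun _ _ => 0} := by
      unfold piK
      ext f
      simp [Fintype.mem_piFinset, funext_iff]
    rw [hpi, Finset.sum_singleton]
    have hC : Cf (m := m) lam (fun _ _ => (0:ℕ)) = 1 := by
      unfold Cf; simp
    have hS : ∀ ε : Fin (m*n) → ℤˣ, Sg (0*n) ε = 1 := by
      intro ε; unfold Sg
      rw [Finset.filter_false_of_mem (fun t _ => by omega), Finset.prod_empty]
    have hg : ∀ ε : Fin (m*n) → ℤˣ,
        gA n 0 (∑ j : Fin d, lam j • x j) x ε (fun _ _ => 0)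
          = fun _ => ∑ j : Fin d, lam j • x j := by
      intro ε; funext i; unfold gA; simp
    have hsummand : ∀ ε : Fin (m*n) → ℤˣ,
        Cf (m := m) lam (fun _ _ => (0:ℕ)) • Sg (0*n) ε •
          P (gA n 0 (∑ j : Fin d, lam j • x j) x ε (fun _ _ => 0))
        = P (fun _ => ∑ j : Fin d, lam j • x j) := by
      intro ε
      rw [hC, hS, hg, one_smul, one_smul]
    rw [Finset.sum_congr rfl fun ε _ => hsummand ε, Finset.sum_const, Finset.card_univ,
      Fintype.card_fun, Fintype.card_units_int, Fintype.card_fin,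
      ← Nat.cast_smul_eq_nsmul 𝕂]
    rw [Nat.cast_pow, Nat.cast_ofNat, inv_smul_smul₀ (pow_ne_zero _ two_ne_zero)]
  | succ k ih =>
    intro hk
    have hkm : k < m := Nat.lt_of_lt_of_le (Nat.lt_succ_self k) hk
    have hblock : k*n + n ≤ m*n := by
      have h1 : (k+1)*n ≤ m*n := Nat.mul_le_mul_right n hkm
      have h2 : (k+1)*n = k*n + n := by ring
      omega
    have h2n : (2 ^ n : 𝕂) ≠ 0 := pow_ne_zero _ two_ne_zero
    set κ : Fin m := ⟨k, hkm⟩ with hκ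
    rw [ih (le_of_lt hkm)]
    congr 1
    -- auxiliary facts
    have hvk : ∀ i : Fin m, i ≠ κ → (i:ℕ) ≠ k := fun i hik h => hik (Fin.ext h)
    have hzero : ∀ α ∈ piK m d n k, α κ = fun _ => 0 := by
      intro α hα
      have h1 := (Fintype.mem_piFinset.mp hα) κ
      rw [if_neg (lt_irrefl k)] at h1
      exact Finset.mem_singleton.mp h1
    -- (D1) coefficient multiplicativity
    have hC : ∀ α ∈ piK m d n k, ∀ β : Fin d → ℕ,
        Cf lam (Function.update α κ β) = Cf lam α * cf lam β := by
      intro α hα β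
      have hα0 := hzero α hα
      have hnum : ∀ j : Fin d, ∑ i, (Function.update α κ β) i j = β j + ∑ i, α i j := by
        intro j
        have h1 : ∀ i, (Function.update α κ β) i j
            = Function.update (fun i' => α i' j) κ (β j) i :=
          fun i => Function.apply_update (fun _ g => g j) α κ β i
        rw [Finset.sum_congr rfl fun i _ => h1 i,
          Finset.sum_update_of_mem (Finset.mem_univ κ)]
        congr 1
        rw [Finset.sum_eq_sum_sdiff_singleton_add (Finset.mem_univ κ) (fun i => α i j)]
        have h2 : α κ j = 0 := congrFun hα0 j
        rw [h2, add_zero]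
      have hden : (∏ i, ∏ j, ((Function.update α κ β) i j).factorial)
          = (∏ j, (β j).factorial) * ∏ i, ∏ j, (α i j).factorial := by
        have h1 : ∀ i, (∏ j, ((Function.update α κ β) i j).factorial)
            = Function.update (fun i' => ∏ j, (α i' j).factorial) κ (∏ j, (β j).factorial) i :=
          fun i => Function.apply_update (fun _ g => ∏ j, (g j).factorial) α κ β i
        rw [Finset.prod_congr rfl fun i _ => h1 i,
          Finset.prod_update_of_mem (Finset.mem_univ κ)]
        congr 1
        rw [Finset.prod_eq_prod_diff_singleton_mul (Finset.mem_univ κ)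
          (fun i => ∏ j, (α i j).factorial)]
        have h2 : (∏ j, (α κ j).factorial) = 1 := by simp [hα0]
        rw [h2, mul_one]
      unfold Cf cf
      have hnum' : (∏ j : Fin d, lam j ^ (∑ i, Function.update α κ β i j))
          = (∏ j : Fin d, lam j ^ β j) * ∏ j : Fin d, lam j ^ (∑ i, α i j) := by
        rw [← Finset.prod_mul_distrib]
        exact Finset.prod_congr rfl fun j _ => by rw [hnum j, pow_add]
      rw [hnum', hden, Nat.cast_mul]
      ring
    -- (D2) sign splitting
    have hS : ∀ (ε : Fin (m*n) → ℤˣ) (δ : Fin n → ℤˣ),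
        Sg ((k+1)*n) (swapB n k ε δ) = Sg (k*n) ε * ∏ u : Fin n, (δ u : ℤ) := by
      intro ε δ
      unfold Sg
      have hsplit : Finset.univ.filter (fun t : Fin (m*n) => (t:ℕ) < (k+1)*n)
          = (Finset.univ.filter (fun t : Fin (m*n) => (t:ℕ) < k*n)) ∪
            (Finset.univ.filter (fun t : Fin (m*n) => k*n ≤ (t:ℕ) ∧ (t:ℕ) < k*n + n)) := by
        ext t
        simp only [Finset.mem_filter, Finset.mem_union, Finset.mem_univ, true_and]
        have h2 : (k+1)*n = k*n + n := by ring
        omega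
      have hdisj : Disjoint (Finset.univ.filter (fun t : Fin (m*n) => (t:ℕ) < k*n))
          (Finset.univ.filter (fun t : Fin (m*n) => k*n ≤ (t:ℕ) ∧ (t:ℕ) < k*n + n)) := by
        rw [Finset.disjoint_left]
        intro t ht1 ht2
        rw [Finset.mem_filter] at ht1 ht2
        omega
      rw [hsplit, Finset.prod_union hdisj]
      congr 1
      · refine Finset.prod_congr rfl fun t ht => ?_
        rw [Finset.mem_filter] at ht
        show ((if h : k*n ≤ (t:ℕ) ∧ (t:ℕ) < k*n + n
            then δ ⟨(t:ℕ) - k*n, by omega⟩ else ε t : ℤˣ) : ℤ) = (ε t : ℤ)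
        rw [dif_neg (by omega)]
      · refine (Finset.prod_bij'
          (i := fun (u : Fin n) (_ : u ∈ Finset.univ) =>
            (⟨k*n + (u:ℕ), by have := u.2; omega⟩ : Fin (m*n)))
          (j := fun (t : Fin (m*n)) (ht : t ∈ Finset.univ.filter
              (fun t : Fin (m*n) => k*n ≤ (t:ℕ) ∧ (t:ℕ) < k*n + n)) =>
            (⟨(t:ℕ) - k*n, by have := (Finset.mem_filter.mp ht).2; omega⟩ : Fin n))
          ?_ ?_ ?_ ?_ ?_).symm
        · intro u _
          rw [Finset.mem_filter]
          refine ⟨Finset.mem_univ _, ?_, ?_⟩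
          · show k*n ≤ k*n + (u:ℕ)
            omega
          · show k*n + (u:ℕ) < k*n + n
            have := u.2
            omega
        · intro t _
          exact Finset.mem_univ _
        · intro u _
          exact Fin.ext (by show k*n + (u:ℕ) - k*n = (u:ℕ); omega)
        · intro t ht
          have h1 := (Finset.mem_filter.mp ht).2
          exact Fin.ext (by show k*n + ((t:ℕ) - k*n) = (t:ℕ); omega)
        · intro u _
          show (δ u : ℤ) = ((if h : k*n ≤ (k*n + (u:ℕ)) ∧ (k*n + (u:ℕ)) < k*n + n
            then δ ⟨(k*n + (u:ℕ)) - k*n, by omega⟩ else ε _ : ℤˣ) : ℤ)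
          rw [dif_pos ⟨Nat.le_add_right _ _, by have := u.2; omega⟩]
          congr 1
          exact congrArg δ (Fin.ext (by show k*n + (u:ℕ) - k*n = (u:ℕ); omega)).symm
    -- signAt transport lemmas
    have hsw1 : ∀ (ε : Fin (m*n) → ℤˣ) (δ : Fin n → ℤˣ) (s' : ℕ), s' < n →
        signAt (swapB n k ε δ) (k*n + s') = signAt δ s' := by
      intro ε δ s' hs'
      unfold signAt
      rw [dif_pos (by omega : k*n + s' < m*n), dif_pos hs']
      show ((if h : k*n ≤ k*n + s' ∧ k*n + s' < k*n + n
          then δ ⟨k*n + s' - k*n, by omega⟩ else ε _ : ℤˣ) : ℤ) = _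
      rw [dif_pos ⟨Nat.le_add_right _ _, by omega⟩]
      congr 1
      exact congrArg δ (Fin.ext (by show k*n + s' - k*n = s'; omega))
    have hsw2 : ∀ (ε : Fin (m*n) → ℤˣ) (δ : Fin n → ℤˣ) (p : ℕ), p < k*n →
        signAt (swapB n k ε δ) p = signAt ε p := by
      intro ε δ p hp
      unfold signAt
      by_cases hpm : p < m*n
      · rw [dif_pos hpm, dif_pos hpm]
        show ((if h : k*n ≤ p ∧ p < k*n + n
            then δ ⟨p - k*n, by omega⟩ else ε ⟨p, hpm⟩ : ℤˣ) : ℤ) = _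
        rw [dif_neg (by omega)]
      · rw [dif_neg hpm, dif_neg hpm]
    -- (D3) argument identification
    have hArg : ∀ α ∈ piK m d n k, ∀ β ∈ Finset.Nat.antidiagonalTuple d n,
        ∀ (ε : Fin (m*n) → ℤˣ) (δ : Fin n → ℤˣ),
        gA n (k+1) (∑ j : Fin d, lam j • x j) x (swapB n k ε δ) (Function.update α κ β)
          = Function.update (gA n k (∑ j : Fin d, lam j • x j) x ε α) κ
              (∑ j : Fin d, (∑ t ∈ Finset.range (β j), signAt δ (offs β j + t)) • x j) := by
      intro α hα β hβm ε δ
      have hβsum : ∑ j, β j = n := Finset.Nat.mem_antidiagonalTuple.mp hβm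
      funext i
      by_cases hik : i = κ
      · rw [hik, Function.update_self]
        show (if (κ:ℕ) < k+1 then
            ∑ j : Fin d, epsSum n (swapB n k ε δ) (Function.update α κ β) κ j • x j
          else _) = _
        rw [if_pos (Nat.lt_succ_self k : (κ:ℕ) < k+1)]
        refine Finset.sum_congr rfl fun j _ => ?_
        congr 1
        unfold epsSum
        simp only [Function.update_self]
        refine Finset.sum_congr rfl fun t ht => ?_
        have hb : offs β j + t < n := by
          have h1 := offs_add_le β j
          have h2 := Finset.mem_range.mp ht
          omega
        have h3 : (κ:ℕ)*n + (∑ j' ∈ Finset.univ.filter (fun j' => j' < j), β j') + t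
            = k*n + (offs β j + t) := by
          show k*n + offs β j + t = k*n + (offs β j + t)
          omega
        rw [h3]
        exact hsw1 ε δ _ hb
      · rw [Function.update_of_ne hik]
        have hvki := hvk i hik
        show (if (i:ℕ) < k+1 then
            ∑ j : Fin d, epsSum n (swapB n k ε δ) (Function.update α κ β) i j • x j
          else _) = (if (i:ℕ) < k then ∑ j : Fin d, epsSum n ε α i j • x j else _)
        by_cases hik2 : (i:ℕ) < k
        · rw [if_pos (by omega), if_pos hik2]
          have hrow : ∑ j', α i j' = n := by
            have h1 := (Fintype.mem_piFinset.mp hα) i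
            rw [if_pos hik2] at h1
            exact Finset.Nat.mem_antidiagonalTuple.mp h1
          refine Finset.sum_congr rfl fun j _ => ?_
          congr 1
          unfold epsSum
          simp only [Function.update_of_ne hik]
          refine Finset.sum_congr rfl fun t ht => ?_
          have hb : (∑ j' ∈ Finset.univ.filter (fun j' => j' < j), α i j') + t < n := by
            have h1 := offs_add_le (α i) j
            rw [hrow] at h1
            have h2 := Finset.mem_range.mp ht
            have h3 : offs (α i) j = ∑ j' ∈ Finset.univ.filter (fun j' => j' < j), α i j' := rfl
            omega
          have hp : (i:ℕ)*n + (∑ j' ∈ Finset.univ.filter (fun j' => j' < j), α i j') + t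
              < k*n := by
            have h1 : ((i:ℕ)+1)*n ≤ k*n := Nat.mul_le_mul_right n (by omega)
            have h2 : ((i:ℕ)+1)*n = (i:ℕ)*n + n := by ring
            omega
          exact hsw2 ε δ _ hp
        · rw [if_neg (by omega), if_neg hik2]
    -- expansion of one coordinate via lemA
    have hexp : ∀ α ∈ piK m d n k, ∀ ε : Fin (m*n) → ℤˣ,
        P (gA n k (∑ j : Fin d, lam j • x j) x ε α)
        = (2^n:𝕂)⁻¹ • ∑ β ∈ Finset.Nat.antidiagonalTuple d n, ∑ δ : Fin n → ℤˣ,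
            cf lam β • (∏ u : Fin n, (δ u : ℤ)) •
              P (Function.update (gA n k (∑ j : Fin d, lam j • x j) x ε α) κ
                (∑ j : Fin d, (∑ t ∈ Finset.range (β j), signAt δ (offs β j + t)) • x j)) := by
      intro α hα ε
      have hgκ : gA n k (∑ j : Fin d, lam j • x j) x ε α κ = ∑ j : Fin d, lam j • x j := by
        unfold gA
        rw [if_neg (lt_irrefl k)]
      have h0 := Function.update_eq_self κ (gA n k (∑ j : Fin d, lam j • x j) x ε α)
      rw [hgκ] at h0
      have hlem := lemA (𝕂 := 𝕂)
        (fun y => P (Function.update (gA n k (∑ j : Fin d, lam j • x j) x ε α) κ y))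
        (hP κ (gA n k (∑ j : Fin d, lam j • x j) x ε α)) x lam
      simp only [] at hlem
      rw [h0] at hlem
      exact hlem
    -- swap-reindexing of sign sums
    have hswap : ∀ T : (Fin (m*n) → ℤˣ) → F,
        (∑ ε : Fin (m*n) → ℤˣ, ∑ δ : Fin n → ℤˣ, T (swapB n k ε δ))
          = (2^n:ℕ) • ∑ ε : Fin (m*n) → ℤˣ, T ε := by
      intro T
      calc (∑ ε : Fin (m*n) → ℤˣ, ∑ δ : Fin n → ℤˣ, T (swapB n k ε δ))
          = ∑ p : (Fin (m*n) → ℤˣ) × (Fin n → ℤˣ), T (swapB n k p.1 p.2) :=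
            (Fintype.sum_prod_type
              (fun p : (Fin (m*n) → ℤˣ) × (Fin n → ℤˣ) => T (swapB n k p.1 p.2))).symm
        _ = ∑ p : (Fin (m*n) → ℤˣ) × (Fin n → ℤˣ),
              (fun q : (Fin (m*n) → ℤˣ) × (Fin n → ℤˣ) => T q.1)
                ((Function.Involutive.toPerm _ (swap_invol n k hblock)) p) := by
            refine Finset.sum_congr rfl fun p _ => ?_
            rw [Function.Involutive.coe_toPerm]
        _ = ∑ p : (Fin (m*n) → ℤˣ) × (Fin n → ℤˣ), T p.1 :=
            Equiv.sum_comp (Function.Involutive.toPerm _ (swap_invol n k hblock))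
              (fun q : (Fin (m*n) → ℤˣ) × (Fin n → ℤˣ) => T q.1)
        _ = ∑ ε : Fin (m*n) → ℤˣ, ∑ _δ : Fin n → ℤˣ, T ε :=
            Fintype.sum_prod_type (fun p : (Fin (m*n) → ℤˣ) × (Fin n → ℤˣ) => T p.1)
        _ = ∑ ε : Fin (m*n) → ℤˣ, (2^n:ℕ) • T ε := by
            refine Finset.sum_congr rfl fun ε _ => ?_
            rw [Finset.sum_const, Finset.card_univ, Fintype.card_fun,
              Fintype.card_units_int, Fintype.card_fin]
        _ = (2^n:ℕ) • ∑ ε : Fin (m*n) → ℤˣ, T ε := (Finset.smul_sum).symm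
    -- term-level identity
    have hterm2 : ∀ α ∈ piK m d n k, ∀ β ∈ Finset.Nat.antidiagonalTuple d n,
        ∀ (ε : Fin (m*n) → ℤˣ) (δ : Fin n → ℤˣ),
        (2^n:𝕂)⁻¹ • Cf lam α • Sg (k*n) ε • (cf lam β • (∏ u : Fin n, (δ u : ℤ)) •
          P (Function.update (gA n k (∑ j : Fin d, lam j • x j) x ε α) κ
            (∑ j : Fin d, (∑ t ∈ Finset.range (β j), signAt δ (offs β j + t)) • x j)))
        = (2^n:𝕂)⁻¹ • Cf lam (Function.update α κ β) •
            Sg ((k+1)*n) (swapB n k ε δ) •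
              P (gA n (k+1) (∑ j : Fin d, lam j • x j) x (swapB n k ε δ)
                (Function.update α κ β)) := by
      intro α hα β hβm ε δ
      rw [hArg α hα β hβm ε δ, hC α hα β, hS ε δ, mul_smul, mul_smul,
        smul_comm (Sg (k*n) ε) (cf lam β)]
    -- now chain everything
    calc ∑ α ∈ piK m d n k, ∑ ε : Fin (m*n) → ℤˣ,
          Cf lam α • Sg (k*n) ε • P (gA n k (∑ j : Fin d, lam j • x j) x ε α)
        = ∑ α ∈ piK m d n k, ∑ ε : Fin (m*n) → ℤˣ,
            ∑ β ∈ Finset.Nat.antidiagonalTuple d n, ∑ δ : Fin n → ℤˣ,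
              (2^n:𝕂)⁻¹ • Cf lam α • Sg (k*n) ε • (cf lam β • (∏ u : Fin n, (δ u : ℤ)) •
                P (Function.update (gA n k (∑ j : Fin d, lam j • x j) x ε α) κ
                  (∑ j : Fin d, (∑ t ∈ Finset.range (β j), signAt δ (offs β j + t)) • x j))) := by
          refine Finset.sum_congr rfl fun α hα => Finset.sum_congr rfl fun ε _ => ?_
          rw [hexp α hα ε, smul_comm (Sg (k*n) ε) ((2^n:𝕂)⁻¹),
            smul_comm (Cf lam α) ((2^n:𝕂)⁻¹)]
          simp only [Finset.smul_sum]
      _ = ∑ α ∈ piK m d n k, ∑ β ∈ Finset.Nat.antidiagonalTuple d n,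
            ∑ ε : Fin (m*n) → ℤˣ, ∑ δ : Fin n → ℤˣ,
              (2^n:𝕂)⁻¹ • Cf lam α • Sg (k*n) ε • (cf lam β • (∏ u : Fin n, (δ u : ℤ)) •
                P (Function.update (gA n k (∑ j : Fin d, lam j • x j) x ε α) κ
                  (∑ j : Fin d, (∑ t ∈ Finset.range (β j), signAt δ (offs β j + t)) • x j))) := by
          exact Finset.sum_congr rfl fun α _ => Finset.sum_comm
      _ = ∑ α ∈ piK m d n k, ∑ β ∈ Finset.Nat.antidiagonalTuple d n,
            ∑ ε : Fin (m*n) → ℤˣ, ∑ δ : Fin n → ℤˣ,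
              (2^n:𝕂)⁻¹ • Cf lam (Function.update α κ β) •
                Sg ((k+1)*n) (swapB n k ε δ) •
                  P (gA n (k+1) (∑ j : Fin d, lam j • x j) x (swapB n k ε δ)
                    (Function.update α κ β)) := by
          refine Finset.sum_congr rfl fun α hα => Finset.sum_congr rfl fun β hβ =>
            Finset.sum_congr rfl fun ε _ => Finset.sum_congr rfl fun δ _ => ?_
          exact hterm2 α hα β hβ ε δ
      _ = ∑ α ∈ piK m d n k, ∑ β ∈ Finset.Nat.antidiagonalTuple d n,
            (2^n:ℕ) • ∑ ε : Fin (m*n) → ℤˣ,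
              (2^n:𝕂)⁻¹ • Cf lam (Function.update α κ β) • Sg ((k+1)*n) ε •
                P (gA n (k+1) (∑ j : Fin d, lam j • x j) x ε (Function.update α κ β)) := by
          refine Finset.sum_congr rfl fun α _ => Finset.sum_congr rfl fun β _ => ?_
          exact hswap (fun ε' => (2^n:𝕂)⁻¹ • Cf lam (Function.update α κ β) •
            Sg ((k+1)*n) ε' •
              P (gA n (k+1) (∑ j : Fin d, lam j • x j) x ε' (Function.update α κ β)))
      _ = ∑ α ∈ piK m d n k, ∑ β ∈ Finset.Nat.antidiagonalTuple d n,
            ∑ ε : Fin (m*n) → ℤˣ,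
              Cf lam (Function.update α κ β) • Sg ((k+1)*n) ε •
                P (gA n (k+1) (∑ j : Fin d, lam j • x j) x ε (Function.update α κ β)) := by
          refine Finset.sum_congr rfl fun α _ => Finset.sum_congr rfl fun β _ => ?_
          rw [← Finset.smul_sum, ← Nat.cast_smul_eq_nsmul 𝕂, smul_smul]
          rw [show ((2^n:ℕ):𝕂) * (2^n:𝕂)⁻¹ = 1 by push_cast; exact mul_inv_cancel₀ h2n]
          rw [one_smul]
      _ = ∑ p ∈ (piK m d n k) ×ˢ (Finset.Nat.antidiagonalTuple d n),
            ∑ ε : Fin (m*n) → ℤˣ,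
              Cf lam (Function.update p.1 κ p.2) • Sg ((k+1)*n) ε •
                P (gA n (k+1) (∑ j : Fin d, lam j • x j) x ε (Function.update p.1 κ p.2)) :=
          (Finset.sum_product' _ _ _).symm
      _ = ∑ α ∈ piK m d n (k+1), ∑ ε : Fin (m*n) → ℤˣ,
            Cf lam α • Sg ((k+1)*n) ε •
              P (gA n (k+1) (∑ j : Fin d, lam j • x j) x ε α) := by
          refine Finset.sum_nbij' (i := fun p => Function.update p.1 κ p.2)
            (j := fun α' => (Function.update α' κ (fun _ => 0), α' κ)) ?_ ?_ ?_ ?_ ?_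
          · rintro ⟨α, β⟩ hp
            rw [Finset.mem_product] at hp
            unfold piK
            rw [Fintype.mem_piFinset]
            intro i
            show Function.update α κ β i ∈
              (if (i:ℕ) < k+1 then Finset.Nat.antidiagonalTuple d n else {fun _ => 0})
            by_cases hiκ : i = κ
            · rw [hiκ, Function.update_self, if_pos (Nat.lt_succ_self k : (κ:ℕ) < k+1)]
              exact hp.2
            · rw [Function.update_of_ne hiκ]
              have hvki := hvk i hiκ
              have h1 := (Fintype.mem_piFinset.mp hp.1) i
              by_cases hik2 : (i:ℕ) < k
              · rw [if_pos hik2] at h1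
                rw [if_pos (by omega)]
                exact h1
              · rw [if_neg hik2] at h1
                rw [if_neg (by omega)]
                exact h1
          · intro α' hα'
            rw [Finset.mem_product]
            constructor
            · unfold piK
              rw [Fintype.mem_piFinset]
              intro i
              show Function.update α' κ (fun _ => 0) i ∈
                (if (i:ℕ) < k then Finset.Nat.antidiagonalTuple d n else {fun _ => 0})
              by_cases hiκ : i = κ
              · rw [hiκ, Function.update_self, if_neg (lt_irrefl k : ¬((κ:ℕ) < k))]
                exact Finset.mem_singleton_self _
              · rw [Function.update_of_ne hiκ]
                have hvki := hvk i hiκ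
                have h1 := (Fintype.mem_piFinset.mp hα') i
                by_cases hik2 : (i:ℕ) < k
                · rw [if_pos (by omega)] at h1
                  rw [if_pos hik2]
                  exact h1
                · rw [if_neg (by omega)] at h1
                  rw [if_neg hik2]
                  exact h1
            · have h1 := (Fintype.mem_piFinset.mp hα') κ
              rw [if_pos (Nat.lt_succ_self k : (κ:ℕ) < k+1)] at h1
              exact h1
          · rintro ⟨α, β⟩ hp
            rw [Finset.mem_product] at hp
            have hα0 := hzero α hp.1
            refine Prod.ext ?_ ?_
            · show Function.update (Function.update α κ β) κ (fun _ => 0) = α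
              rw [Function.update_idem, ← hα0, Function.update_eq_self]
            · show Function.update α κ β κ = β
              rw [Function.update_self]
          · intro α' hα'
            show Function.update (Function.update α' κ (fun _ => 0)) κ (α' κ) = α'
            rw [Function.update_idem, Function.update_eq_self]
          · rintro ⟨α, β⟩ _
            rfl

end Main

end MLP

/-- Combined Leibniz/polarization expansion: for an `(n, …, n)`-homogeneous polynomial
`P : E^m → F`, all `x₁, …, x_d ∈ E` and `λ₁, …, λ_d ∈ 𝕂`,
`P (∑ⱼ λⱼ xⱼ)^m = 2^{-mn} ∑_α ∑_ε (λ₁^{|α_{·1}|} ⋯ λ_d^{|α_{·d}|} / (α₁! ⋯ α_m!))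
ε₁ ⋯ ε_{mn} P (∑ⱼ ε_{1j} xⱼ, …, ∑ⱼ ε_{mj} xⱼ)`, where `α` ranges over the `m × d` matrices
of nonnegative integers with all row sums equal to `n`. -/
theorem multipoly_leibniz_polarization {𝕂 : Type*} [RCLike 𝕂] {E F : Type*}
    [AddCommGroup E] [Module 𝕂 E] [AddCommGroup F] [Module 𝕂 F]
    {m n d : ℕ} (P : (Fin m → E) → F) (hP : IsMultiPoly 𝕂 (fun _ : Fin m => n) P)
    (x : Fin d → E) (lam : Fin d → 𝕂) :
    P (fun _ => ∑ j : Fin d, lam j • x j) =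
      (2 ^ (m * n) : 𝕂)⁻¹ •
        ∑ α ∈ Fintype.piFinset (fun _ : Fin m => Finset.Nat.antidiagonalTuple d n),
          ∑ ε : Fin (m * n) → ℤˣ,
            ((∏ j : Fin d, lam j ^ (∑ i : Fin m, α i j)) /
                ((∏ i : Fin m, ∏ j : Fin d, (α i j).factorial : ℕ) : 𝕂)) •
              (∏ k : Fin (m * n), (ε k : ℤ)) •
                P (fun i => ∑ j : Fin d, epsSum n ε α i j • x j) := by
  have h := MLP.step P hP x lam m le_rfl
  rw [h]
  congr 1
  have hpi : MLP.piK m d n m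
      = Fintype.piFinset (fun _ : Fin m => Finset.Nat.antidiagonalTuple d n) := by
    unfold MLP.piK
    exact congrArg Fintype.piFinset (funext fun i => if_pos i.isLt)
  rw [hpi]
  refine Finset.sum_congr rfl fun α _ => Finset.sum_congr rfl fun ε _ => ?_
  have hSg : MLP.Sg (m*n) ε = ∏ t : Fin (m*n), (ε t : ℤ) := by
    unfold MLP.Sg
    rw [Finset.filter_true_of_mem (fun t _ => t.2)]
  have hgA : MLP.gA n m (∑ j : Fin d, lam j • x j) x ε α
      = fun i => ∑ j : Fin d, epsSum n ε α i j • x j := by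
    funext i
    unfold MLP.gA
    rw [if_pos i.2]
  rw [hSg, hgA]
  rfl
end

section
/- For each symmetric mn-linear map A : E^{mn} → F, the map ΨA : E^m → F defined by ΨA(x₁,…,x_m) = A(x₁,…,x₁, x₂,…,x₂, …, x_m,…,x_m) (each x_i repeated n times) is a symmetric (n,…,n)-homogeneous polynomial (n repeated m times), and the map Ψ from the space of symmetric mn-linear maps E^{mn} → F to the space of symmetric (n,…,n)-homogeneous polynomials E^m → F is linear and injective. -/
open scoped BigOperators

open Finset in
lemma coeff_sum {N : ℕ} (t : Finset (Fin N)) :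
    (∑ S ∈ (Finset.univ : Finset (Fin N)).powerset,
      if t ⊆ S then ((-1 : ℤ) ^ (N - S.card)) else 0)
      = if t = Finset.univ then 1 else 0 := by
  classical
  rw [← Finset.sum_filter]
  have key : ∑ S ∈ (Finset.univ : Finset (Fin N)).powerset.filter (fun S => t ⊆ S),
      (-1 : ℤ) ^ (N - S.card)
      = ∑ T ∈ tᶜ.powerset, (-1 : ℤ) ^ (N - (T ∪ t).card) := by
    refine Finset.sum_nbij' (fun S => S \ t) (fun T => T ∪ t) ?_ ?_ ?_ ?_ ?_
    · intro S hS
      simp only [Finset.mem_filter, Finset.mem_powerset] at hS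
      simp only [Finset.mem_powerset]
      intro k hk
      simp only [Finset.mem_sdiff] at hk
      simp [hk.2]
    · intro T hT
      simp only [Finset.mem_powerset] at hT
      simp only [Finset.mem_filter, Finset.mem_powerset]
      exact ⟨Finset.subset_univ _, Finset.subset_union_right⟩
    · intro S hS
      simp only [Finset.mem_filter, Finset.mem_powerset] at hS
      exact Finset.sdiff_union_of_subset hS.2
    · intro T hT
      simp only [Finset.mem_powerset] at hT
      have hd : Disjoint T t := by
        rw [Finset.disjoint_iff_inter_eq_empty, Finset.eq_empty_iff_forall_notMem]
        intro k hk
        simp only [Finset.mem_inter] at hk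
        have := hT hk.1
        simp only [Finset.mem_compl] at this
        exact this hk.2
      show (T ∪ t) \ t = T
      rw [Finset.union_sdiff_right, Finset.sdiff_eq_self_of_disjoint hd]
    · intro S hS
      simp only [Finset.mem_filter, Finset.mem_powerset] at hS
      rw [Finset.sdiff_union_of_subset hS.2]
  rw [key]
  have hcard : ∀ T ∈ tᶜ.powerset, (T ∪ t).card = T.card + t.card := by
    intro T hT
    simp only [Finset.mem_powerset] at hT
    refine Finset.card_union_of_disjoint ?_
    rw [Finset.disjoint_left]
    intro k hk hk2
    have := hT hk
    simp only [Finset.mem_compl] at this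
    exact this hk2
  have hM : tᶜ.card = N - t.card := by
    rw [Finset.card_compl, Fintype.card_fin]
  have step : ∀ T ∈ tᶜ.powerset, (-1 : ℤ) ^ (N - (T ∪ t).card)
      = (-1 : ℤ) ^ tᶜ.card * (-1 : ℤ) ^ T.card := by
    intro T hT
    have h1 : (T ∪ t).card = T.card + t.card := hcard T hT
    have hTle : T.card ≤ tᶜ.card := Finset.card_le_card (Finset.mem_powerset.mp hT)
    have h2 : N - (T.card + t.card) = tᶜ.card - T.card := by
      rw [hM]
      omega
    rw [h1, h2]
    have h3 : (-1 : ℤ) ^ (tᶜ.card - T.card) * (-1 : ℤ) ^ T.card = (-1 : ℤ) ^ tᶜ.card := by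
      rw [← pow_add, Nat.sub_add_cancel hTle]
    calc (-1 : ℤ) ^ (tᶜ.card - T.card)
        = (-1 : ℤ) ^ (tᶜ.card - T.card) * ((-1 : ℤ) ^ T.card * (-1 : ℤ) ^ T.card) := by
          rw [← pow_add, ← two_mul, pow_mul]; norm_num
      _ = (-1 : ℤ) ^ tᶜ.card * (-1 : ℤ) ^ T.card := by rw [← mul_assoc, h3]
  rw [Finset.sum_congr rfl step, ← Finset.mul_sum, Finset.sum_powerset_neg_one_pow_card]
  by_cases h : t = Finset.univ
  · subst h
    simp
  · have : tᶜ ≠ ∅ := by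
      intro hc
      exact h (by simpa using congrArg compl hc)
    simp [this, h]

lemma polar {𝕂 : Type*} [RCLike 𝕂] {E F : Type*} [AddCommGroup E] [Module 𝕂 E]
    [AddCommGroup F] [Module 𝕂 F] {N : ℕ}
    (A : MultilinearMap 𝕂 (fun _ : Fin N => E) F)
    (hA : ∀ (σ : Equiv.Perm (Fin N)) (z : Fin N → E), A (z ∘ σ) = A z)
    (hdiag : ∀ x : E, (A fun _ => x) = 0) (x : Fin N → E) : A x = 0 := by
  classical
  have h1 : ∀ S : Finset (Fin N), (A fun _ => ∑ i ∈ S, x i)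
      = ∑ r : Fin N → Fin N, if (∀ i, r i ∈ S) then A (fun i => x (r i)) else 0 := by
    intro S
    rw [A.map_sum_finset (fun _ j => x j) (fun _ => S)]
    have hps : Fintype.piFinset (fun _ : Fin N => S)
        = Finset.univ.filter (fun r : Fin N → Fin N => ∀ i, r i ∈ S) := by
      ext r; simp [Fintype.mem_piFinset]
    rw [hps, Finset.sum_filter]
  have h0 : (0 : F) = ∑ S ∈ (Finset.univ : Finset (Fin N)).powerset,
      (-1 : ℤ) ^ (N - S.card) • (A fun _ => ∑ i ∈ S, x i) := by
    simp [hdiag]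
  simp only [h1, Finset.smul_sum] at h0
  rw [Finset.sum_comm] at h0
  have h2 : ∀ r : Fin N → Fin N,
      (∑ S ∈ (Finset.univ : Finset (Fin N)).powerset,
        (-1 : ℤ) ^ (N - S.card) • (if (∀ i, r i ∈ S) then A (fun i => x (r i)) else 0))
      = (if Finset.image r Finset.univ = Finset.univ then (1 : ℤ) else 0)
          • A (fun i => x (r i)) := by
    intro r
    rw [← coeff_sum (Finset.image r Finset.univ), Finset.sum_smul]
    refine Finset.sum_congr rfl fun S _ => ?_
    have hc : (Finset.image r Finset.univ ⊆ S) ↔ (∀ i, r i ∈ S) := by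
      simp [Finset.image_subset_iff]
    rw [smul_ite, smul_zero, ite_smul, zero_smul, if_congr hc rfl rfl]
  simp only [h2, ite_smul, one_smul, zero_smul] at h0
  rw [← Finset.sum_filter] at h0
  have h3 : ∀ r ∈ Finset.univ.filter
      (fun r : Fin N → Fin N => Finset.image r Finset.univ = Finset.univ),
      A (fun i => x (r i)) = A x := by
    intro r hr
    simp only [Finset.mem_filter] at hr
    have hsurj : Function.Surjective r := by
      intro y
      have : y ∈ Finset.image r Finset.univ := by rw [hr.2]; exact Finset.mem_univ y
      rcases Finset.mem_image.mp this with ⟨i, _, hi⟩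
      exact ⟨i, hi⟩
    have hbij : Function.Bijective r := Finite.surjective_iff_bijective.mp hsurj
    exact hA (Equiv.ofBijective r hbij) x
  rw [Finset.sum_congr rfl h3, Finset.sum_const] at h0
  have hcard : 0 < (Finset.univ.filter
      (fun r : Fin N → Fin N => Finset.image r Finset.univ = Finset.univ)).card :=
    Finset.card_pos.mpr ⟨id, by simp⟩
  have h4 := h0.symm
  rw [← Nat.cast_smul_eq_nsmul 𝕂] at h4
  rcases smul_eq_zero.mp h4 with h | h
  · exact absurd (Nat.cast_eq_zero.mp h) hcard.ne'
  · exact h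


/-- `P : E^m → F` is symmetric if it is invariant under permutations of its arguments. -/
def IsSymm' {E F : Type*} {m : ℕ} (P : (Fin m → E) → F) : Prop :=
  ∀ (σ : Equiv.Perm (Fin m)) (x : Fin m → E), P (x ∘ σ) = P x

/-- `Ψ A (x₁, …, x_m) = A (x₁, …, x₁, x₂, …, x₂, …, x_m, …, x_m)`, each `x_i` repeated
`n` times (the argument in slot `k` of `A` is `x_{⌊k/n⌋}`). -/
def Psi (𝕂 : Type*) [RCLike 𝕂] {E F : Type*}
    [AddCommGroup E] [Module 𝕂 E] [AddCommGroup F] [Module 𝕂 F] (m n : ℕ)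
    (A : MultilinearMap 𝕂 (fun _ : Fin (m * n) => E) F) : (Fin m → E) → F :=
  fun x => A fun k => x k.divNat

/-- For every symmetric `mn`-linear map `A : E^{mn} → F`, `Ψ A` is a symmetric
`(n, …, n)`-homogeneous polynomial `E^m → F`, and `Ψ` is linear and injective on the
space of symmetric `mn`-linear maps. -/
theorem psi_linear_injective {𝕂 : Type*} [RCLike 𝕂] {E F : Type*}
    [AddCommGroup E] [Module 𝕂 E] [AddCommGroup F] [Module 𝕂 F]
    {m n : ℕ} (hm : 0 < m) (hn : 0 < n) :
    (∀ A : MultilinearMap 𝕂 (fun _ : Fin (m * n) => E) F,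
        (∀ (σ : Equiv.Perm (Fin (m * n))) (z : Fin (m * n) → E), A (z ∘ σ) = A z) →
        IsMultiPoly 𝕂 (fun _ : Fin m => n) (Psi 𝕂 m n A) ∧ IsSymm' (Psi 𝕂 m n A)) ∧
    (∀ A B : MultilinearMap 𝕂 (fun _ : Fin (m * n) => E) F,
        Psi 𝕂 m n (A + B) = Psi 𝕂 m n A + Psi 𝕂 m n B) ∧
    (∀ (c : 𝕂) (A : MultilinearMap 𝕂 (fun _ : Fin (m * n) => E) F),
        Psi 𝕂 m n (c • A) = c • Psi 𝕂 m n A) ∧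
    (∀ A B : MultilinearMap 𝕂 (fun _ : Fin (m * n) => E) F,
        (∀ (σ : Equiv.Perm (Fin (m * n))) (z : Fin (m * n) → E), A (z ∘ σ) = A z) →
        (∀ (σ : Equiv.Perm (Fin (m * n))) (z : Fin (m * n) → E), B (z ∘ σ) = B z) →
        Psi 𝕂 m n A = Psi 𝕂 m n B → A = B) := by
  classical
  have hdiv : ∀ p : Fin m × Fin n, (finProdFinEquiv p).divNat = p.1 :=
    fun p => congrArg Prod.fst (finProdFinEquiv.symm_apply_apply p)
  have hmod : ∀ p : Fin m × Fin n, (finProdFinEquiv p).modNat = p.2 :=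
    fun p => congrArg Prod.snd (finProdFinEquiv.symm_apply_apply p)
  refine ⟨?_, ?_, ?_, ?_⟩
  · intro A hA
    constructor
    · -- IsMultiPoly
      intro j x
      set P : Fin (m * n) → Prop := fun k => k.divNat = j with hP
      have : DecidablePred P := fun k => decEq _ _
      set B0 := A.domDomRestrict P (fun k => x k.1.divNat) with hB0
      set e : Fin n ≃ {k : Fin (m * n) // P k} :=
        { toFun := fun i => ⟨finProdFinEquiv (j, i), hdiv (j, i)⟩
          invFun := fun k => k.1.modNat
          left_inv := fun i => by simp [hmod (j, i)]
          right_inv := fun k => by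
            apply Subtype.ext
            calc (finProdFinEquiv (j, k.1.modNat) : Fin (m * n))
                = finProdFinEquiv (k.1.divNat, k.1.modNat) := by rw [k.2]
              _ = finProdFinEquiv (finProdFinEquiv.symm k.1) := rfl
              _ = k.1 := finProdFinEquiv.apply_symm_apply k.1 } with he
      refine ⟨B0.domDomCongr e.symm, ?_⟩
      intro y
      show Psi 𝕂 m n A (Function.update x j y) = _
      rw [MultilinearMap.domDomCongr_apply, MultilinearMap.domDomRestrict_apply]
      show A (fun k => Function.update x j y k.divNat) = _
      congr 1
      funext k
      by_cases h : P k
      · rw [dif_pos h, hP] at *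
        rw [h, Function.update_self]
      · rw [dif_neg h]
        rw [Function.update_of_ne h]
    · -- symmetry
      intro σ x
      set τ : Equiv.Perm (Fin (m * n)) :=
        (finProdFinEquiv.symm.trans ((σ.prodCongr (Equiv.refl (Fin n))).trans
          finProdFinEquiv)) with hτ
      have hτd : ∀ k : Fin (m * n), (τ k).divNat = σ k.divNat := by
        intro k
        simp only [hτ, Equiv.trans_apply]
        rw [hdiv]
        rfl
      have := hA τ (fun k => x k.divNat)
      calc Psi 𝕂 m n A (x ∘ σ) = A (fun k => x (σ k.divNat)) := rfl
        _ = A ((fun k => x k.divNat) ∘ τ) := by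
            congr 1; funext k; simp [Function.comp, hτd k]
        _ = Psi 𝕂 m n A x := this
  · intro A B; funext x; simp [Psi]
  · intro c A; funext x; simp [Psi]
  · intro A B hA hB hAB
    have hC : ∀ (σ : Equiv.Perm (Fin (m * n))) (z : Fin (m * n) → E),
        (A - B) (z ∘ σ) = (A - B) z := by
      intro σ z
      simp [MultilinearMap.sub_apply, hA σ z, hB σ z]
    have hdiag : ∀ x : E, ((A - B) fun _ => x) = 0 := by
      intro x
      have := congrFun hAB (fun _ => x)
      simp only [Psi] at this
      simp [MultilinearMap.sub_apply]
      rw [sub_eq_zero]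
      convert this using 2
    have := polar (A - B) hC hdiag
    ext z
    have h := this z
    rw [MultilinearMap.sub_apply, sub_eq_zero] at h
    exact h
end

section
/- Let P : E^m → F be a symmetric (n,…,n)-homogeneous polynomial (n repeated m times). If for all x₀, x₁, …, x_m ∈ E the entire polarization formula holds, namely P(x₁,…,x_m) = (1/((mn)!·2^{mn})) Σ_{ε∈{±1}^{mn}} ε₁⋯ε_{mn} · P(x₀ + Σ_{k=1}^{n} ε_k x₁ + ⋯ + Σ_{k=1}^{n} ε_{(m−1)n+k} x_m)^m, then there exists a symmetric mn-linear map A : E^{mn} → F with P(x₁,…,x_m) = A(x₁,…,x₁, …, x_m,…,x_m) (each x_i repeated n times). -/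
open scoped BigOperators

set_option linter.unusedSectionVars false
set_option linter.unusedVariables false
set_option maxHeartbeats 1000000

section PolarKey

variable {𝕂 : Type*} [RCLike 𝕂] {E F : Type*} [AddCommGroup E] [Module 𝕂 E]
  [AddCommGroup F] [Module 𝕂 F]

private lemma units_int_univ : (Finset.univ : Finset ℤˣ) = {1, -1} := by
  decide

private lemma sum_units_pow (M : ℕ) : ∑ u : ℤˣ, ((u : ℤ) : 𝕂) ^ M = 1 + (-1 : 𝕂) ^ M := by
  rw [units_int_univ, Finset.sum_insert (by decide), Finset.sum_singleton]
  norm_num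

private lemma good_perm {N : ℕ} (f : Fin N → Option (Fin N))
    (hf : ∀ k, Odd (Finset.univ.filter (fun j => f j = some k)).card) :
    ∃ σ : Equiv.Perm (Fin N), (fun j => (some (σ j) : Option (Fin N))) = f := by
  classical
  have hpos : ∀ k, 1 ≤ (Finset.univ.filter (fun j => f j = some k)).card := by
    intro k
    rcases Nat.eq_zero_or_pos (Finset.univ.filter (fun j => f j = some k)).card with h0 | h1
    · exfalso; have := hf k; rw [h0] at this; simp at this
    · exact h1
  have hsum : ∑ k, (Finset.univ.filter (fun j => f j = some k)).card
      = ∑ j, (f j).elim 0 (fun _ => 1) := by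
    calc ∑ k, (Finset.univ.filter (fun j => f j = some k)).card
        = ∑ k, ∑ j, if f j = some k then 1 else 0 :=
          Finset.sum_congr rfl fun k _ => Finset.card_filter _ _
      _ = ∑ j, ∑ k, if f j = some k then 1 else 0 := Finset.sum_comm
      _ = ∑ j, (f j).elim 0 (fun _ => 1) := by
          refine Finset.sum_congr rfl fun j _ => ?_
          cases hfj : f j with
          | none => simp
          | some k₀ => simp [eq_comm]
  have huniv : ∑ _j : Fin N, (1 : ℕ) = N := by simp
  have hle : ∑ j, (f j).elim 0 (fun _ => 1) ≤ N :=
    le_trans (Finset.sum_le_sum fun j _ => by cases f j <;> simp) (le_of_eq huniv)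
  have hge : N ≤ ∑ k, (Finset.univ.filter (fun j => f j = some k)).card :=
    le_trans (le_of_eq huniv.symm) (Finset.sum_le_sum fun k _ => hpos k)
  have heq : ∑ k, (Finset.univ.filter (fun j => f j = some k)).card = N :=
    le_antisymm (le_trans (le_of_eq hsum) hle) hge
  have hck : ∀ k, (Finset.univ.filter (fun j => f j = some k)).card = 1 := by
    have h1 : ∑ _k : Fin N, (1 : ℕ)
        = ∑ k, (Finset.univ.filter (fun j => f j = some k)).card := by rw [heq, huniv]
    have h2 := (Finset.sum_eq_sum_iff_of_le (fun k _ => hpos k)).1 h1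
    intro k; exact (h2 k (Finset.mem_univ k)).symm
  have hnone : ∀ j, ∃ k, f j = some k := by
    intro j
    cases hfj : f j with
    | some k => exact ⟨k, rfl⟩
    | none =>
      exfalso
      have hlt : ∑ j', (f j').elim 0 (fun _ => 1) < ∑ _j' : Fin N, 1 :=
        Finset.sum_lt_sum (fun i _ => by cases f i <;> simp)
          ⟨j, Finset.mem_univ j, by rw [hfj]; simp⟩
      have hcontra : N < N := by
        calc N = ∑ k, (Finset.univ.filter (fun j => f j = some k)).card := heq.symm
          _ = ∑ j', (f j').elim 0 (fun _ => 1) := hsum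
          _ < ∑ _j' : Fin N, 1 := hlt
          _ = N := huniv
      exact lt_irrefl _ hcontra
  choose g hg using hnone
  have hginj : Function.Injective g := by
    intro j₁ j₂ hgj
    have hcard := hck (g j₁)
    rw [Finset.card_eq_one] at hcard
    obtain ⟨a, ha⟩ := hcard
    have h1 : j₁ ∈ Finset.univ.filter (fun j => f j = some (g j₁)) := by simp [hg]
    have h2 : j₂ ∈ Finset.univ.filter (fun j => f j = some (g j₁)) := by simp [hg j₂, hgj]
    rw [ha, Finset.mem_singleton] at h1 h2
    rw [h1, h2]
  exact ⟨Equiv.ofBijective g (Finite.injective_iff_bijective.1 hginj),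
    funext fun j => (hg j).symm⟩

private lemma polar_key (N : ℕ) (B : MultilinearMap 𝕂 (fun _ : Fin N => E) F)
    (x₀ : E) (z : Fin N → E) :
    ∑ ε : Fin N → ℤˣ, (∏ k, (ε k : ℤ)) • B (fun _ => x₀ + ∑ k, (ε k : ℤ) • z k)
      = (2 ^ N : ℤ) • ∑ σ : Equiv.Perm (Fin N), B (fun j => z (σ j)) := by
  classical
  have step1 : ∀ ε : Fin N → ℤˣ,
      B (fun _ => x₀ + ∑ k, (ε k : ℤ) • z k)
        = ∑ f : Fin N → Option (Fin N),
            (∏ j, (f j).elim (1 : 𝕂) (fun k => ((ε k : ℤ) : 𝕂)))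
              • B (fun j => (f j).elim x₀ z) := by
    intro ε
    have harg : (fun _ : Fin N => x₀ + ∑ k, (ε k : ℤ) • z k)
        = fun _ : Fin N => ∑ o : Option (Fin N),
            (Option.elim o (1 : 𝕂) (fun k => ((ε k : ℤ) : 𝕂))) • Option.elim o x₀ z := by
      funext j
      rw [univ_option, Finset.sum_insertNone]
      simp only [Option.elim, one_smul]
      congr 1
      exact Finset.sum_congr rfl fun k _ => (Int.cast_smul_eq_zsmul 𝕂 _ _).symm
    rw [harg, B.map_sum]
    refine Finset.sum_congr rfl fun f _ => ?_
    exact B.map_smul_univ (fun j => (f j).elim (1 : 𝕂) fun k => ((ε k : ℤ) : 𝕂))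
      (fun j => (f j).elim x₀ z)
  calc ∑ ε : Fin N → ℤˣ, (∏ k, (ε k : ℤ)) • B (fun _ => x₀ + ∑ k, (ε k : ℤ) • z k)
      = ∑ ε : Fin N → ℤˣ, ∑ f : Fin N → Option (Fin N),
          ((∏ k, ((ε k : ℤ) : 𝕂)) * ∏ j, (f j).elim (1 : 𝕂) (fun k => ((ε k : ℤ) : 𝕂)))
            • B (fun j => (f j).elim x₀ z) := by
        refine Finset.sum_congr rfl fun ε _ => ?_
        rw [step1 ε, ← Int.cast_smul_eq_zsmul 𝕂, Finset.smul_sum]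
        refine Finset.sum_congr rfl fun f _ => ?_
        rw [smul_smul, Int.cast_prod]
    _ = ∑ f : Fin N → Option (Fin N),
          (∑ ε : Fin N → ℤˣ, ∏ k, ((ε k : ℤ) : 𝕂)
              ^ ((Finset.univ.filter (fun j => f j = some k)).card + 1))
            • B (fun j => (f j).elim x₀ z) := by
        rw [Finset.sum_comm]
        refine Finset.sum_congr rfl fun f _ => ?_
        rw [Finset.sum_smul]
        refine Finset.sum_congr rfl fun ε _ => ?_
        congr 1
        have h2 : ∏ j, (f j).elim (1 : 𝕂) (fun k => ((ε k : ℤ) : 𝕂))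
            = ∏ k, ((ε k : ℤ) : 𝕂) ^ (Finset.univ.filter (fun j => f j = some k)).card := by
          rw [← Finset.prod_fiberwise_of_maps_to (g := f) (t := Finset.univ)
              (fun j _ => Finset.mem_univ (f j))
              (fun j => (f j).elim (1 : 𝕂) (fun k => ((ε k : ℤ) : 𝕂)))]
          rw [univ_option, Finset.prod_insertNone]
          have hnone : (∏ j ∈ Finset.univ.filter (fun j => f j = none),
              (f j).elim (1 : 𝕂) (fun k => ((ε k : ℤ) : 𝕂))) = 1 :=
            Finset.prod_eq_one fun j hj => by
              rw [(Finset.mem_filter.1 hj).2]; rfl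
          rw [hnone, one_mul]
          refine Finset.prod_congr rfl fun k _ => ?_
          rw [Finset.prod_congr rfl (fun j hj => by rw [(Finset.mem_filter.1 hj).2]; rfl :
            ∀ j ∈ Finset.univ.filter (fun j => f j = some k),
              (f j).elim (1 : 𝕂) (fun k' => ((ε k' : ℤ) : 𝕂)) = ((ε k : ℤ) : 𝕂)),
            Finset.prod_const]
        rw [h2, ← Finset.prod_mul_distrib]
        exact Finset.prod_congr rfl fun k _ => by rw [mul_comm, ← pow_succ]
    _ = ∑ f : Fin N → Option (Fin N),
          (if ∀ k, Odd (Finset.univ.filter (fun j => f j = some k)).card then (2 : 𝕂) ^ N else 0)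
            • B (fun j => (f j).elim x₀ z) := by
        refine Finset.sum_congr rfl fun f _ => ?_
        congr 1
        rw [← Fintype.piFinset_univ, ← Finset.prod_univ_sum (fun _ : Fin N => (Finset.univ : Finset ℤˣ))
          (fun k u => ((u : ℤ) : 𝕂) ^ ((Finset.univ.filter (fun j => f j = some k)).card + 1))]
        by_cases hodd : ∀ k, Odd (Finset.univ.filter (fun j => f j = some k)).card
        · rw [if_pos hodd]
          have hone : ∀ k : Fin N,
              (∑ u : ℤˣ, ((u : ℤ) : 𝕂)
                ^ ((Finset.univ.filter (fun j => f j = some k)).card + 1)) = 2 := by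
            intro k
            rw [sum_units_pow, ((hodd k).add_one).neg_one_pow]
            norm_num
          rw [Finset.prod_congr rfl fun k _ => hone k, Finset.prod_const]
          simp
        · rw [if_neg hodd]
          push_neg at hodd
          obtain ⟨k₀, hk₀⟩ := hodd
          refine Finset.prod_eq_zero (Finset.mem_univ k₀) ?_
          rw [sum_units_pow, ((Nat.not_odd_iff_even.1 hk₀).add_one).neg_one_pow]
          ring
    _ = ∑ f ∈ Finset.univ.filter
          (fun f : Fin N → Option (Fin N) =>
            ∀ k, Odd (Finset.univ.filter (fun j => f j = some k)).card),
          (2 : 𝕂) ^ N • B (fun j => (f j).elim x₀ z) := by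
        rw [Finset.sum_filter]
        refine Finset.sum_congr rfl fun f _ => ?_
        split_ifs <;> simp
    _ = ∑ σ : Equiv.Perm (Fin N), (2 : 𝕂) ^ N • B (fun j => z (σ j)) := by
        refine (Finset.sum_bij (fun (σ : Equiv.Perm (Fin N)) _ => fun j => some (σ j))
          ?_ ?_ ?_ ?_).symm
        · intro σ _
          simp only [Finset.mem_filter, Finset.mem_univ, true_and]
          intro k
          have hs : Finset.univ.filter (fun j => (some (σ j) : Option (Fin N)) = some k)
              = {σ.symm k} := by
            ext j
            simp [Equiv.eq_symm_apply, eq_comm]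
          rw [hs]
          simp
        · intro σ₁ _ σ₂ _ hσ
          refine Equiv.ext fun j => Option.some_injective _ ?_
          exact congrFun hσ j
        · intro f hf
          obtain ⟨σ, hσ⟩ := good_perm f (Finset.mem_filter.1 hf).2
          exact ⟨σ, Finset.mem_univ σ, hσ⟩
        · intro σ _
          rfl
    _ = (2 ^ N : ℤ) • ∑ σ : Equiv.Perm (Fin N), B (fun j => z (σ j)) := by
        rw [← Finset.smul_sum, ← Int.cast_smul_eq_zsmul 𝕂]
        norm_num

end PolarKey
section Main

variable {𝕂 : Type*} [RCLike 𝕂] {E F : Type*} [AddCommGroup E] [Module 𝕂 E]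
  [AddCommGroup F] [Module 𝕂 F] {m n : ℕ}

private lemma block_key (P : (Fin m → E) → F) (hP : IsMultiPoly 𝕂 (fun _ : Fin m => n) P)
    (i₀ : Fin m) (X : Fin m → E) :
    ∃ M : MultilinearMap 𝕂 (fun _ : Fin n => E) F,
      (∀ y : Fin n → E,
        ∑ δ : Fin n → ℤˣ, (∏ t, (δ t : ℤ)) • P (Function.update X i₀ (∑ t, (δ t : ℤ) • y t))
          = (2 ^ n : ℤ) • M y) ∧
      (∀ w : E, M (fun _ => w) = n.factorial • P (Function.update X i₀ w)) := by
  obtain ⟨A, hA0⟩ := hP i₀ X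
  have hA : ∀ x, P (Function.update X i₀ x) = A fun _ => x := fun x => hA0 x
  refine ⟨∑ σ : Equiv.Perm (Fin n), A.domDomCongr σ, fun y => ?_, fun w => ?_⟩
  · have hp := polar_key (𝕂 := 𝕂) n A 0 y
    simp only [zero_add] at hp
    calc ∑ δ : Fin n → ℤˣ, (∏ t, (δ t : ℤ)) • P (Function.update X i₀ (∑ t, (δ t : ℤ) • y t))
        = ∑ δ : Fin n → ℤˣ, (∏ t, (δ t : ℤ)) • A (fun _ => ∑ t, (δ t : ℤ) • y t) :=
          Finset.sum_congr rfl fun δ _ => by rw [hA]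
      _ = (2 ^ n : ℤ) • ∑ σ : Equiv.Perm (Fin n), A (fun j => y (σ j)) := hp
      _ = (2 ^ n : ℤ) • (∑ σ : Equiv.Perm (Fin n), A.domDomCongr σ) y := by
          rw [MultilinearMap.sum_apply]
          simp only [MultilinearMap.domDomCongr_apply]
  · rw [MultilinearMap.sum_apply]
    have : ∀ σ : Equiv.Perm (Fin n), (A.domDomCongr σ) (fun _ => w)
        = P (Function.update X i₀ w) := fun σ => by
      rw [MultilinearMap.domDomCongr_apply]
      exact (hA w).symm
    rw [Finset.sum_congr rfl fun σ _ => this σ, Finset.sum_const, Finset.card_univ,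
      Fintype.card_perm, Fintype.card_fin]

private def liftAt (i₀ : Fin m) (ρ : {j : Fin m // j ≠ i₀} → Fin n → ℤˣ) :
    Fin m → Fin n → ℤˣ :=
  fun i => if h : i = i₀ then 1 else ρ ⟨i, h⟩

private lemma sum_split {β : Type*} [AddCommMonoid β] (i₀ : Fin m)
    (g : (Fin m → Fin n → ℤˣ) → β) :
    ∑ ε : Fin m → Fin n → ℤˣ, g ε
      = ∑ ρ : {j : Fin m // j ≠ i₀} → Fin n → ℤˣ, ∑ δ : Fin n → ℤˣ,
          g (Function.update (liftAt i₀ ρ) i₀ δ) := by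
  classical
  rw [← Equiv.sum_comp (Equiv.funSplitAt i₀ (Fin n → ℤˣ)).symm g, Fintype.sum_prod_type,
    Finset.sum_comm]
  refine Finset.sum_congr rfl fun ρ _ => Finset.sum_congr rfl fun δ _ => ?_
  congr 1
  funext i
  by_cases h : i = i₀
  · subst h
    simp [Equiv.funSplitAt, Equiv.piSplitAt, Function.update, liftAt]
  · simp [Equiv.funSplitAt, Equiv.piSplitAt, Function.update, h, liftAt]

private def PhiAux (P : (Fin m → E) → F) (v : Fin m → Fin n → E) : F :=
  ∑ ε : Fin m → Fin n → ℤˣ, (∏ i, ∏ t, (ε i t : ℤ)) • P (fun i => ∑ t, (ε i t : ℤ) • v i t)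

private lemma phi_row (P : (Fin m → E) → F) (hP : IsMultiPoly 𝕂 (fun _ : Fin m => n) P)
    (i₀ : Fin m) (u : Fin m → Fin n → E) :
    ∃ M : MultilinearMap 𝕂 (fun _ : Fin n => E) F, ∀ y : Fin n → E,
      PhiAux P (Function.update u i₀ y) = M y := by
  classical
  have hXrow : ∀ y : Fin n → E, ∀ ρ : {j : Fin m // j ≠ i₀} → Fin n → ℤˣ,
      Function.update (fun i => ∑ t, (liftAt i₀ ρ i t : ℤ) • Function.update u i₀ y i t) i₀ 0
        = Function.update (fun i => ∑ t, (liftAt i₀ ρ i t : ℤ) • u i t) i₀ 0 := by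
    intro y ρ
    funext i
    by_cases h : i = i₀
    · subst h; simp
    · simp only [Function.update_of_ne h]
  choose M hM1 hM2 using fun ρ => block_key P hP i₀
    (Function.update (fun i => ∑ t, (liftAt i₀ ρ i t : ℤ) • u i t) i₀ 0)
  refine ⟨∑ ρ, ((∏ i ∈ Finset.univ.erase i₀, ∏ t, (liftAt i₀ ρ i t : ℤ)) * 2 ^ n) • M ρ,
    fun y => ?_⟩
  rw [MultilinearMap.sum_apply]
  simp only [PhiAux]
  rw [sum_split i₀]
  refine Finset.sum_congr rfl fun ρ _ => ?_
  have hcoef : ∀ δ : Fin n → ℤˣ,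
      (∏ i, ∏ t, ((Function.update (liftAt i₀ ρ) i₀ δ) i t : ℤ))
        = (∏ t, (δ t : ℤ)) * ∏ i ∈ Finset.univ.erase i₀, ∏ t, (liftAt i₀ ρ i t : ℤ) := by
    intro δ
    rw [← Finset.mul_prod_erase Finset.univ _ (Finset.mem_univ i₀)]
    congr 1
    · rw [Function.update_self]
    · refine Finset.prod_congr rfl fun i hi => ?_
      rw [Function.update_of_ne (Finset.mem_erase.1 hi).1]
  have harg : ∀ δ : Fin n → ℤˣ,
      (fun i => ∑ t, ((Function.update (liftAt i₀ ρ) i₀ δ) i t : ℤ) • Function.update u i₀ y i t)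
        = Function.update
            (Function.update (fun i => ∑ t, (liftAt i₀ ρ i t : ℤ) • u i t) i₀ 0) i₀
            (∑ t, (δ t : ℤ) • y t) := by
    intro δ
    funext i
    by_cases h : i = i₀
    · subst h; simp
    · simp only [Function.update_of_ne h]
  calc ∑ δ : Fin n → ℤˣ,
        (∏ i, ∏ t, ((Function.update (liftAt i₀ ρ) i₀ δ) i t : ℤ))
          • P (fun i => ∑ t, ((Function.update (liftAt i₀ ρ) i₀ δ) i t : ℤ)
              • Function.update u i₀ y i t)
      = ∑ δ : Fin n → ℤˣ,
          (∏ i ∈ Finset.univ.erase i₀, ∏ t, (liftAt i₀ ρ i t : ℤ))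
            • ((∏ t, (δ t : ℤ))
              • P (Function.update
                  (Function.update (fun i => ∑ t, (liftAt i₀ ρ i t : ℤ) • u i t) i₀ 0) i₀
                  (∑ t, (δ t : ℤ) • y t))) := by
        refine Finset.sum_congr rfl fun δ _ => ?_
        rw [hcoef δ, harg δ, mul_comm, mul_smul]
    _ = (∏ i ∈ Finset.univ.erase i₀, ∏ t, (liftAt i₀ ρ i t : ℤ))
          • ((2 ^ n : ℤ) • M ρ y) := by
        rw [← Finset.smul_sum, hM1 ρ y]
    _ = (((∏ i ∈ Finset.univ.erase i₀, ∏ t, (liftAt i₀ ρ i t : ℤ)) * 2 ^ n) • M ρ) y := by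
        rw [MultilinearMap.smul_apply, smul_smul]


private lemma card_fn : Fintype.card (Fin n → ℤˣ) = 2 ^ n := by
  rw [Fintype.card_fun, Fintype.card_units_int, Fintype.card_fin]

private def TAux (P : (Fin m → E) → F) (S : Finset (Fin m)) (x : Fin m → E) : F :=
  ∑ ε : Fin m → Fin n → ℤˣ,
    (∏ i ∈ S, ∏ t, (ε i t : ℤ)) • P (fun i => if i ∈ S then ∑ t, (ε i t : ℤ) • x i else x i)

private lemma T_empty (P : (Fin m → E) → F) (x : Fin m → E) :
    TAux (n := n) P ∅ x = ((2 ^ n : ℕ)) ^ m • P x := by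
  have hterm : ∀ ε : Fin m → Fin n → ℤˣ,
      (∏ i ∈ (∅ : Finset (Fin m)), ∏ t, (ε i t : ℤ))
        • P (fun i => if i ∈ (∅ : Finset (Fin m)) then ∑ t, (ε i t : ℤ) • x i else x i)
      = P x := by
    intro ε
    rw [Finset.prod_empty, one_smul]
    exact congrArg P (funext fun i => if_neg (Finset.notMem_empty i))
  simp only [TAux]
  rw [Finset.sum_congr rfl fun ε _ => hterm ε, Finset.sum_const, Finset.card_univ,
    Fintype.card_fun, card_fn, Fintype.card_fin]

private lemma T_step (P : (Fin m → E) → F) (hP : IsMultiPoly 𝕂 (fun _ : Fin m => n) P)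
    (x : Fin m → E) {i₀ : Fin m} {S : Finset (Fin m)} (hi : i₀ ∉ S) :
    (2 ^ n : ℕ) • TAux (n := n) P (insert i₀ S) x = (2 ^ n * n.factorial : ℕ) • TAux (n := n) P S x := by
  classical
  have hR : TAux (n := n) P S x
      = ∑ ρ : {j : Fin m // j ≠ i₀} → Fin n → ℤˣ, (2 ^ n : ℕ) •
          ((∏ i ∈ S, ∏ t, (liftAt i₀ ρ i t : ℤ))
            • P (fun i => if i ∈ S then ∑ t, (liftAt i₀ ρ i t : ℤ) • x i else x i)) := by
    simp only [TAux]
    rw [sum_split i₀]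
    refine Finset.sum_congr rfl fun ρ _ => ?_
    have hterm : ∀ δ : Fin n → ℤˣ,
        (∏ i ∈ S, ∏ t, ((Function.update (liftAt i₀ ρ) i₀ δ) i t : ℤ))
            • P (fun i => if i ∈ S
                then ∑ t, ((Function.update (liftAt i₀ ρ) i₀ δ) i t : ℤ) • x i else x i)
          = (∏ i ∈ S, ∏ t, (liftAt i₀ ρ i t : ℤ))
            • P (fun i => if i ∈ S then ∑ t, (liftAt i₀ ρ i t : ℤ) • x i else x i) := by
      intro δ
      have hcoef : (∏ i ∈ S, ∏ t, ((Function.update (liftAt i₀ ρ) i₀ δ) i t : ℤ))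
          = ∏ i ∈ S, ∏ t, (liftAt i₀ ρ i t : ℤ) :=
        Finset.prod_congr rfl fun i hiS => by
          rw [Function.update_of_ne (fun h : i = i₀ => hi (h ▸ hiS))]
      have harg : (fun i => if i ∈ S
            then ∑ t, ((Function.update (liftAt i₀ ρ) i₀ δ) i t : ℤ) • x i else x i)
          = fun i => if i ∈ S then ∑ t, (liftAt i₀ ρ i t : ℤ) • x i else x i := by
        funext i
        by_cases hiS : i ∈ S
        · rw [if_pos hiS, if_pos hiS, Function.update_of_ne (fun h : i = i₀ => hi (h ▸ hiS))]
        · rw [if_neg hiS, if_neg hiS]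
      rw [hcoef, harg]
    rw [Finset.sum_congr rfl fun δ _ => hterm δ, Finset.sum_const, Finset.card_univ, card_fn]
  have hL : TAux (n := n) P (insert i₀ S) x
      = ∑ ρ : {j : Fin m // j ≠ i₀} → Fin n → ℤˣ,
          (∏ i ∈ S, ∏ t, (liftAt i₀ ρ i t : ℤ))
            • ((2 ^ n : ℤ) • (n.factorial
              • P (fun i => if i ∈ S then ∑ t, (liftAt i₀ ρ i t : ℤ) • x i else x i))) := by
    simp only [TAux]
    rw [sum_split i₀]
    refine Finset.sum_congr rfl fun ρ _ => ?_
    set Y : Fin m → E := fun i => if i ∈ S then ∑ t, (liftAt i₀ ρ i t : ℤ) • x i else x i with hY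
    obtain ⟨M, hM1, hM2⟩ := block_key P hP i₀ Y
    have hterm : ∀ δ : Fin n → ℤˣ,
        (∏ i ∈ insert i₀ S, ∏ t, ((Function.update (liftAt i₀ ρ) i₀ δ) i t : ℤ))
            • P (fun i => if i ∈ insert i₀ S
                then ∑ t, ((Function.update (liftAt i₀ ρ) i₀ δ) i t : ℤ) • x i else x i)
          = (∏ i ∈ S, ∏ t, (liftAt i₀ ρ i t : ℤ))
            • ((∏ t, (δ t : ℤ)) • P (Function.update Y i₀ (∑ t, (δ t : ℤ) • x i₀))) := by
      intro δ
      have hcoef : (∏ i ∈ insert i₀ S, ∏ t, ((Function.update (liftAt i₀ ρ) i₀ δ) i t : ℤ))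
          = (∏ t, (δ t : ℤ)) * ∏ i ∈ S, ∏ t, (liftAt i₀ ρ i t : ℤ) := by
        rw [Finset.prod_insert hi]
        congr 1
        · rw [Function.update_self]
        · exact Finset.prod_congr rfl fun i hiS => by
            rw [Function.update_of_ne (fun h : i = i₀ => hi (h ▸ hiS))]
      have harg : (fun i => if i ∈ insert i₀ S
            then ∑ t, ((Function.update (liftAt i₀ ρ) i₀ δ) i t : ℤ) • x i else x i)
          = Function.update Y i₀ (∑ t, (δ t : ℤ) • x i₀) := by
        funext i
        rcases eq_or_ne i i₀ with h | h
        · subst h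
          rw [if_pos (Finset.mem_insert_self _ _), Function.update_self, Function.update_self]
        · have hmem : (i ∈ insert i₀ S) = (i ∈ S) := by
            simp [Finset.mem_insert, h]
          simp only [Function.update_of_ne h, hmem, hY]
      rw [hcoef, harg, mul_comm, mul_smul]
    rw [Finset.sum_congr rfl fun δ _ => hterm δ, ← Finset.smul_sum]
    congr 1
    have hM1' := hM1 (fun _ => x i₀)
    rw [hM1', hM2 (x i₀)]
    congr 2
    rw [show x i₀ = Y i₀ from (if_neg hi).symm, Function.update_eq_self]
  rw [hL, hR, Finset.smul_sum, Finset.smul_sum]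
  refine Finset.sum_congr rfl fun ρ _ => ?_
  simp only [← natCast_zsmul, smul_smul]
  congr 1
  push_cast
  ring

private lemma T_univ (P : (Fin m → E) → F) (hP : IsMultiPoly 𝕂 (fun _ : Fin m => n) P)
    (x : Fin m → E) :
    ((2 ^ n : ℕ)) ^ m • TAux (n := n) P Finset.univ x
      = ((2 ^ n * n.factorial : ℕ)) ^ m • (((2 ^ n : ℕ)) ^ m • P x) := by
  have key : ∀ S : Finset (Fin m), ((2 ^ n : ℕ)) ^ S.card • TAux (n := n) P S x
      = ((2 ^ n * n.factorial : ℕ)) ^ S.card • TAux (n := n) P ∅ x := by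
    intro S
    induction S using Finset.induction_on with
    | empty => simp
    | @insert i₀ S hi ih =>
      rw [Finset.card_insert_of_notMem hi, pow_succ, mul_smul, T_step P hP x hi,
        smul_comm, ih, ← mul_smul, ← pow_succ']
  have h := key Finset.univ
  rw [Finset.card_univ, Fintype.card_fin, T_empty] at h
  exact h

private lemma phi_diag (P : (Fin m → E) → F) (hP : IsMultiPoly 𝕂 (fun _ : Fin m => n) P)
    (x : Fin m → E) :
    PhiAux (n := n) P (fun i _ => x i) = ((((2 ^ n * n.factorial) ^ m : ℕ)) : 𝕂) • P x := by
  have h0 : PhiAux (n := n) P (fun i _ => x i) = TAux (n := n) P Finset.univ x := by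
    simp only [PhiAux, TAux]
    refine Finset.sum_congr rfl fun ε _ => ?_
    simp [Finset.mem_univ]
  have h1 := T_univ P hP x
  rw [← h0] at h1
  have hc : ∀ (a : ℕ) (v : F), a • v = ((a : 𝕂)) • v :=
    fun a v => (Nat.cast_smul_eq_nsmul 𝕂 a v).symm
  rw [hc, hc, hc] at h1
  have h2 : ((((2 ^ n : ℕ)) ^ m : 𝕂)) ≠ 0 := by
    have : (((2 ^ n : ℕ) : 𝕂)) ≠ 0 := Nat.cast_ne_zero.2 (by positivity)
    exact pow_ne_zero _ this
  have h1' : ((((2 ^ n : ℕ) : 𝕂)) ^ m) • PhiAux (n := n) P (fun i _ => x i)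
      = ((((2 ^ n * n.factorial : ℕ) : 𝕂)) ^ m) • (((((2 ^ n : ℕ) : 𝕂)) ^ m) • P x) := by
    rw [show ((((2 ^ n : ℕ) : 𝕂)) ^ m) = (((2 ^ n : ℕ) ^ m : ℕ) : 𝕂) by push_cast; ring,
      show ((((2 ^ n * n.factorial : ℕ) : 𝕂)) ^ m) = (((2 ^ n * n.factorial : ℕ) ^ m : ℕ) : 𝕂)
        by push_cast; ring]
    exact h1
  calc PhiAux (n := n) P (fun i _ => x i)
      = ((((2 ^ n : ℕ) : 𝕂)) ^ m)⁻¹ • (((((2 ^ n : ℕ) : 𝕂)) ^ m)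
          • PhiAux (n := n) P (fun i _ => x i)) := (inv_smul_smul₀ h2 _).symm
    _ = ((((2 ^ n * n.factorial) ^ m : ℕ)) : 𝕂) • P x := by
        rw [h1', smul_smul, smul_smul]
        congr 1
        push_cast
        field_simp

private lemma divNat_prod (p : Fin m × Fin n) : (finProdFinEquiv p).divNat = p.1 := by
  have h := finProdFinEquiv.symm_apply_apply p
  rw [finProdFinEquiv_symm_apply] at h
  exact congrArg Prod.fst h

private lemma sum_sign (x : Fin m → E) (ε : Fin (m * n) → ℤˣ) :
    ∑ i : Fin m, ∑ t ∈ Finset.range n, signAt ε ((i : ℕ) * n + t) • x i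
      = ∑ k : Fin (m * n), (ε k : ℤ) • x k.divNat := by
  rw [← Equiv.sum_comp finProdFinEquiv (fun k => (ε k : ℤ) • x k.divNat),
    Fintype.sum_prod_type]
  refine Finset.sum_congr rfl fun i _ => ?_
  rw [← Fin.sum_univ_eq_sum_range (fun t => signAt ε ((i : ℕ) * n + t) • x i)]
  refine Finset.sum_congr rfl fun t _ => ?_
  have hlt : (i : ℕ) * n + (t : ℕ) < m * n := by
    have h1 : (i : ℕ) * n + (t : ℕ) < ((i : ℕ) + 1) * n := by
      rw [add_mul, one_mul]
      exact Nat.add_lt_add_left t.is_lt _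
    exact lt_of_lt_of_le h1 (Nat.mul_le_mul_right n i.is_lt)
  rw [signAt, dif_pos hlt]
  have hk : (⟨(i : ℕ) * n + (t : ℕ), hlt⟩ : Fin (m * n)) = finProdFinEquiv (i, t) := by
    apply Fin.ext
    simp [finProdFinEquiv]
    ring
  rw [hk, divNat_prod]

private lemma curry_update [DecidableEq (Fin m × Fin n)] (v : Fin m × Fin n → E) (p : Fin m × Fin n) (w : E) :
    (fun i t => Function.update v p w (i, t))
      = Function.update (fun i t => v (i, t)) p.1
          (Function.update (fun t => v (p.1, t)) p.2 w) := by
  obtain ⟨p1, p2⟩ := p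
  funext i t
  by_cases hi : i = p1
  · subst hi
    rw [Function.update_self]
    by_cases ht : t = p2
    · subst ht
      rw [Function.update_self, Function.update_self]
    · have hne : ((i, t) : Fin m × Fin n) ≠ (i, p2) := fun h => ht (congrArg Prod.snd h)
      rw [Function.update_of_ne hne, Function.update_of_ne ht]
  · have hne : ((i, t) : Fin m × Fin n) ≠ (p1, p2) := fun h => hi (congrArg Prod.fst h)
    rw [Function.update_of_ne hne, Function.update_of_ne hi]



end Main
/-- If a symmetric `(n, …, n)`-homogeneous polynomial `P : E^m → F` satisfies the entire
polarization formula
`P (x₁, …, x_m) = (1/((mn)! 2^{mn})) ∑_ε ε₁ ⋯ ε_{mn}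
P (x₀ + ∑_{k=1}^n ε_k x₁ + ⋯ + ∑_{k=1}^n ε_{(m-1)n+k} x_m)^m` for all `x₀, x₁, …, x_m ∈ E`,
then there is a symmetric `mn`-linear map `A : E^{mn} → F` with
`P (x₁, …, x_m) = A (x₁, …, x₁, …, x_m, …, x_m)` (each `x_i` repeated `n` times). -/
theorem mem_psi_of_entire_polarization {𝕂 : Type*} [RCLike 𝕂] {E F : Type*}
    [AddCommGroup E] [Module 𝕂 E] [AddCommGroup F] [Module 𝕂 F]
    {m n : ℕ} (P : (Fin m → E) → F)
    (hsym : IsSymm' P) (hP : IsMultiPoly 𝕂 (fun _ : Fin m => n) P)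
    (hpol : ∀ (x₀ : E) (x : Fin m → E),
      P x =
        (((m * n).factorial * 2 ^ (m * n) : ℕ) : 𝕂)⁻¹ •
          ∑ ε : Fin (m * n) → ℤˣ,
            (∏ k : Fin (m * n), (ε k : ℤ)) •
              P (fun _ => x₀ + ∑ i : Fin m, ∑ t ∈ Finset.range n,
                signAt ε ((i : ℕ) * n + t) • x i)) :
    ∃ A : MultilinearMap 𝕂 (fun _ : Fin (m * n) => E) F,
      (∀ (σ : Equiv.Perm (Fin (m * n))) (z : Fin (m * n) → E), A (z ∘ σ) = A z) ∧
      (∀ x : Fin m → E, P x = A fun k => x k.divNat) := by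
  classical
  -- Step 1: the block polarization of `P` is a multilinear map on `(Fin m × Fin n) → E`.
  obtain ⟨A', hA'⟩ : ∃ A' : MultilinearMap 𝕂 (fun _ : Fin m × Fin n => E) F,
      ∀ v, A' v = PhiAux P (fun i t => v (i, t)) := by
    refine ⟨{ toFun := fun v => PhiAux P (fun i t => v (i, t)),
              map_update_add' := ?_, map_update_smul' := ?_ }, fun v => rfl⟩
    · intro _ v p a b
      obtain ⟨M, hM⟩ := phi_row P hP p.1 (fun i t => v (i, t))
      have hself : PhiAux P (fun i t => v (i, t))
          = M (fun t => v (p.1, t)) := by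
        rw [← hM (fun t => v (p.1, t))]
        congr 1
        exact (Function.update_eq_self p.1 (fun i t => v (i, t))).symm
      show PhiAux P (fun i t => Function.update v p (a + b) (i, t))
          = PhiAux P (fun i t => Function.update v p a (i, t))
            + PhiAux P (fun i t => Function.update v p b (i, t))
      rw [curry_update, curry_update, curry_update, hM, hM, hM]
      exact M.map_update_add _ _ _ _
    · intro _ v p c a
      obtain ⟨M, hM⟩ := phi_row P hP p.1 (fun i t => v (i, t))
      show PhiAux P (fun i t => Function.update v p (c • a) (i, t))
          = c • PhiAux P (fun i t => Function.update v p a (i, t))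
      rw [curry_update, curry_update, hM, hM]
      exact M.map_update_smul _ _ _ _
  have hA'diag : ∀ x : Fin m → E,
      A' (fun p => x p.1) = ((((2 ^ n * n.factorial) ^ m : ℕ)) : 𝕂) • P x := by
    intro x
    rw [hA']
    exact phi_diag P hP x
  have hD : ((((2 ^ n * n.factorial) ^ m : ℕ)) : 𝕂) ≠ 0 :=
    Nat.cast_ne_zero.2 (by positivity)
  -- Step 2: transport to `Fin (m * n)` and normalize.
  set A₃ : MultilinearMap 𝕂 (fun _ : Fin (m * n) => E) F :=
    ((((2 ^ n * n.factorial) ^ m : ℕ)) : 𝕂)⁻¹ • (A'.domDomCongr finProdFinEquiv) with hA₃def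
  have hA₃ : ∀ x : Fin m → E, A₃ (fun k => x k.divNat) = P x := by
    intro x
    have h1 : (A'.domDomCongr finProdFinEquiv) (fun k => x k.divNat)
        = A' (fun p => x p.1) := by
      rw [MultilinearMap.domDomCongr_apply]
      congr 1
      funext p
      rw [divNat_prod p]
    rw [hA₃def, MultilinearMap.smul_apply, h1, hA'diag, smul_smul, inv_mul_cancel₀ hD,
      one_smul]
  -- Step 3: symmetrize.
  refine ⟨(((m * n).factorial : ℕ) : 𝕂)⁻¹
      • ∑ σ : Equiv.Perm (Fin (m * n)), A₃.domDomCongr σ, ?_, ?_⟩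
  · intro τ z
    simp only [MultilinearMap.smul_apply, MultilinearMap.sum_apply,
      MultilinearMap.domDomCongr_apply]
    congr 1
    have hre := Equiv.sum_comp (Equiv.mulLeft τ)
      (fun σ : Equiv.Perm (Fin (m * n)) => A₃ (fun i => z (σ i)))
    rw [← hre]
    refine Finset.sum_congr rfl fun σ _ => ?_
    congr 1
  · intro x
    have hz := hpol 0 x
    have hQ : ∀ w : E, P (fun _ : Fin m => w) = A₃ (fun _ : Fin (m * n) => w) :=
      fun w => (hA₃ (fun _ => w)).symm
    have key := polar_key (𝕂 := 𝕂) (m * n) A₃ 0 (fun k => x k.divNat)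
    have hstep : ∀ ε : Fin (m * n) → ℤˣ,
        P (fun _ : Fin m => 0 + ∑ i : Fin m, ∑ t ∈ Finset.range n,
            signAt ε ((i : ℕ) * n + t) • x i)
          = A₃ (fun _ : Fin (m * n) => 0 + ∑ k : Fin (m * n), (ε k : ℤ) • x k.divNat) := by
      intro ε
      rw [hQ]
      congr 1
      funext _
      rw [sum_sign x ε]
    rw [hz, Finset.sum_congr rfl fun ε _ => by rw [hstep ε]]
    rw [key]
    simp only [MultilinearMap.smul_apply, MultilinearMap.sum_apply,
      MultilinearMap.domDomCongr_apply]
    rw [← Int.cast_smul_eq_zsmul 𝕂, smul_smul]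
    congr 1
    have hf : (((m * n).factorial : ℕ) : 𝕂) ≠ 0 :=
      Nat.cast_ne_zero.2 (Nat.factorial_ne_zero _)
    have h2 : ((2 : 𝕂)) ^ (m * n) ≠ 0 := pow_ne_zero _ two_ne_zero
    push_cast
    field_simp
end

section
/- The map P : ℝ² × ℝ² → ℝ defined by P((x₁,x₂),(y₁,y₂)) = x₁x₂y₁y₂ is a symmetric (2,2)-homogeneous polynomial, yet there exists no symmetric 4-linear map A : (ℝ²)⁴ → ℝ with P(x,y) = A(x,x,y,y) for all x, y ∈ ℝ²; in particular, P fails the entire polarization formula at x₀ = 0, x = e₁, y = e₂ (the canonical basis vectors). -/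
open scoped BigOperators

/-- Auxiliary bilinear form: `z ↦ c * (z 0).1 * (z 1).2`. -/
noncomputable def auxB (c : ℝ) : MultilinearMap ℝ (fun _ : Fin 2 => ℝ × ℝ) ℝ :=
  c • ((MultilinearMap.mkPiAlgebra ℝ (Fin 2) ℝ).compLinearMap
    ![LinearMap.fst ℝ ℝ ℝ, LinearMap.snd ℝ ℝ ℝ])

theorem auxB_apply (c : ℝ) (x : ℝ × ℝ) : auxB c (fun _ => x) = c * (x.1 * x.2) := by
  simp [auxB, MultilinearMap.compLinearMap_apply, Fin.prod_univ_two]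

/-- Explicit equivalence used to expand the sum over sign vectors. -/
def auxE4 : (ℤˣ × ℤˣ × ℤˣ × ℤˣ) ≃ (Fin 4 → ℤˣ) where
  toFun p := ![p.1, p.2.1, p.2.2.1, p.2.2.2]
  invFun ε := (ε 0, ε 1, ε 2, ε 3)
  left_inv p := rfl
  right_inv ε := by funext i; fin_cases i <;> rfl

def auxV1 : ℝ × ℝ := (1, 0)
def auxV2 : ℝ × ℝ := (0, 1)
def auxV3 : ℝ × ℝ := (1, 1)

theorem auxV3_eq : auxV3 = auxV1 + auxV2 := by
  simp [auxV1, auxV2, auxV3, Prod.ext_iff]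

/-- No symmetric 4-linear map represents `(x, y) ↦ x₁x₂y₁y₂` via `A(x,x,y,y)`. -/
theorem aux_no_symmetric :
    ¬ ∃ A : MultilinearMap ℝ (fun _ : Fin 4 => ℝ × ℝ) ℝ,
        (∀ (σ : Equiv.Perm (Fin 4)) (z : Fin 4 → ℝ × ℝ), A (z ∘ σ) = A z) ∧
        (∀ x y : ℝ × ℝ, x.1 * x.2 * y.1 * y.2 = A ![x, x, y, y]) := by
  rintro ⟨A, hsym, hA⟩
  -- update helpers
  have upd0 : ∀ (p q r s x : ℝ × ℝ), Function.update ![p,q,r,s] 0 x = ![x,q,r,s] :=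
    fun p q r s x => by funext i; fin_cases i <;> simp [Function.update]
  have upd1 : ∀ (p q r s x : ℝ × ℝ), Function.update ![p,q,r,s] 1 x = ![p,x,r,s] :=
    fun p q r s x => by funext i; fin_cases i <;> simp [Function.update]
  have upd2 : ∀ (p q r s x : ℝ × ℝ), Function.update ![p,q,r,s] 2 x = ![p,q,x,s] :=
    fun p q r s x => by funext i; fin_cases i <;> simp [Function.update]
  have upd3 : ∀ (p q r s x : ℝ × ℝ), Function.update ![p,q,r,s] 3 x = ![p,q,r,x] :=
    fun p q r s x => by funext i; fin_cases i <;> simp [Function.update]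
  have add0 : ∀ (q r s u v : ℝ × ℝ), A ![u+v,q,r,s] = A ![u,q,r,s] + A ![v,q,r,s] := by
    intro q r s u v; have h := A.map_update_add ![0,q,r,s] 0 u v; simpa [upd0] using h
  have add1 : ∀ (p r s u v : ℝ × ℝ), A ![p,u+v,r,s] = A ![p,u,r,s] + A ![p,v,r,s] := by
    intro p r s u v; have h := A.map_update_add ![p,0,r,s] 1 u v; simpa [upd1] using h
  have add2 : ∀ (p q s u v : ℝ × ℝ), A ![p,q,u+v,s] = A ![p,q,u,s] + A ![p,q,v,s] := by
    intro p q s u v; have h := A.map_update_add ![p,q,0,s] 2 u v; simpa [upd2] using h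
  have add3 : ∀ (p q r u v : ℝ × ℝ), A ![p,q,r,u+v] = A ![p,q,r,u] + A ![p,q,r,v] := by
    intro p q r u v; have h := A.map_update_add ![p,q,r,0] 3 u v; simpa [upd3] using h
  -- symmetry instances
  have sym01 : ∀ p q r s : ℝ × ℝ, A ![p,q,r,s] = A ![q,p,r,s] := by
    intro p q r s
    have h := hsym (Equiv.swap 0 1) ![p,q,r,s]
    have hc : (![p,q,r,s] ∘ Equiv.swap (0 : Fin 4) 1) = ![q,p,r,s] := by
      funext i; fin_cases i <;> simp [Equiv.swap_apply_of_ne_of_ne]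
    rw [hc] at h; exact h.symm
  have sym12 : ∀ p q r s : ℝ × ℝ, A ![p,q,r,s] = A ![p,r,q,s] := by
    intro p q r s
    have h := hsym (Equiv.swap 1 2) ![p,q,r,s]
    have hc : (![p,q,r,s] ∘ Equiv.swap (1 : Fin 4) 2) = ![p,r,q,s] := by
      funext i; fin_cases i <;> simp [Equiv.swap_apply_of_ne_of_ne]
    rw [hc] at h; exact h.symm
  have sym13 : ∀ p q r s : ℝ × ℝ, A ![p,q,r,s] = A ![p,s,r,q] := by
    intro p q r s
    have h := hsym (Equiv.swap 1 3) ![p,q,r,s]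
    have hc : (![p,q,r,s] ∘ Equiv.swap (1 : Fin 4) 3) = ![p,s,r,q] := by
      funext i; fin_cases i <;> simp [Equiv.swap_apply_of_ne_of_ne]
    rw [hc] at h; exact h.symm
  have sym23 : ∀ p q r s : ℝ × ℝ, A ![p,q,r,s] = A ![p,q,s,r] := by
    intro p q r s
    have h := hsym (Equiv.swap 2 3) ![p,q,r,s]
    have hc : (![p,q,r,s] ∘ Equiv.swap (2 : Fin 4) 3) = ![p,q,s,r] := by
      funext i; fin_cases i <;> simp [Equiv.swap_apply_of_ne_of_ne]
    rw [hc] at h; exact h.symm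
  -- known values from hA
  have h1122 : A ![auxV1,auxV1,auxV2,auxV2] = 0 := by
    rw [← hA auxV1 auxV2]; norm_num [auxV1, auxV2]
  have h1111 : A ![auxV1,auxV1,auxV1,auxV1] = 0 := by
    rw [← hA auxV1 auxV1]; norm_num [auxV1]
  have h2222 : A ![auxV2,auxV2,auxV2,auxV2] = 0 := by
    rw [← hA auxV2 auxV2]; norm_num [auxV2]
  have h11ww : A ![auxV1,auxV1,auxV3,auxV3] = 0 := by
    rw [← hA auxV1 auxV3]; norm_num [auxV1, auxV3]
  have h22ww : A ![auxV2,auxV2,auxV3,auxV3] = 0 := by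
    rw [← hA auxV2 auxV3]; norm_num [auxV2, auxV3]
  have hwwww : A ![auxV3,auxV3,auxV3,auxV3] = 1 := by
    rw [← hA auxV3 auxV3]; norm_num [auxV3]
  -- A(e1,e1,e1,e2) = 0
  have h1112 : A ![auxV1,auxV1,auxV1,auxV2] = 0 := by
    have E : A ![auxV1,auxV1,auxV1+auxV2,auxV1+auxV2] =
        A ![auxV1,auxV1,auxV1,auxV1] + A ![auxV1,auxV1,auxV1,auxV2] +
        A ![auxV1,auxV1,auxV2,auxV1] + A ![auxV1,auxV1,auxV2,auxV2] := by
      rw [add2, add3, add3]; ring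
    rw [← auxV3_eq] at E
    have hs : A ![auxV1,auxV1,auxV2,auxV1] = A ![auxV1,auxV1,auxV1,auxV2] := by
      rw [sym23]
    rw [h11ww, h1111, h1122, hs] at E
    linarith
  -- A(e2,e2,e2,e1) = 0
  have h2221 : A ![auxV2,auxV2,auxV2,auxV1] = 0 := by
    have E : A ![auxV2,auxV2,auxV1+auxV2,auxV1+auxV2] =
        A ![auxV2,auxV2,auxV1,auxV1] + A ![auxV2,auxV2,auxV1,auxV2] +
        A ![auxV2,auxV2,auxV2,auxV1] + A ![auxV2,auxV2,auxV2,auxV2] := by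
      rw [add2, add3, add3]; ring
    rw [← auxV3_eq] at E
    have hs1 : A ![auxV2,auxV2,auxV1,auxV1] = A ![auxV1,auxV1,auxV2,auxV2] := by
      rw [sym12, sym01, sym13]
    have hs2 : A ![auxV2,auxV2,auxV1,auxV2] = A ![auxV2,auxV2,auxV2,auxV1] := by
      rw [sym23]
    rw [h22ww, hs1, h1122, hs2, h2222] at E
    linarith
  -- the mixed value must be 1/2
  have hmix : A ![auxV1,auxV2,auxV3,auxV3] = 1/2 := by
    have E : A ![auxV1+auxV2,auxV1+auxV2,auxV3,auxV3] =
        A ![auxV1,auxV1,auxV3,auxV3] + A ![auxV1,auxV2,auxV3,auxV3] +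
        A ![auxV2,auxV1,auxV3,auxV3] + A ![auxV2,auxV2,auxV3,auxV3] := by
      rw [add0, add1, add1]; ring
    rw [← auxV3_eq] at E
    have hs : A ![auxV2,auxV1,auxV3,auxV3] = A ![auxV1,auxV2,auxV3,auxV3] := by
      rw [sym01]
    rw [hwwww, h11ww, h22ww, hs] at E
    linarith
  -- but the mixed value is 0
  have hmix0 : A ![auxV1,auxV2,auxV3,auxV3] = 0 := by
    have E : A ![auxV1,auxV2,auxV1+auxV2,auxV1+auxV2] =
        A ![auxV1,auxV2,auxV1,auxV1] + A ![auxV1,auxV2,auxV1,auxV2] +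
        A ![auxV1,auxV2,auxV2,auxV1] + A ![auxV1,auxV2,auxV2,auxV2] := by
      rw [add2, add3, add3]; ring
    rw [← auxV3_eq] at E
    have hs1 : A ![auxV1,auxV2,auxV1,auxV1] = A ![auxV1,auxV1,auxV1,auxV2] := by
      rw [sym13]
    have hs2 : A ![auxV1,auxV2,auxV1,auxV2] = A ![auxV1,auxV1,auxV2,auxV2] := by
      rw [sym12]
    have hs3 : A ![auxV1,auxV2,auxV2,auxV1] = A ![auxV1,auxV1,auxV2,auxV2] := by
      rw [sym13]
    have hs4 : A ![auxV1,auxV2,auxV2,auxV2] = A ![auxV2,auxV2,auxV2,auxV1] := by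
      rw [sym01, sym12, sym23]
    rw [hs1, hs2, hs3, hs4, h1112, h1122, h2221] at E
    linarith
  rw [hmix0] at hmix
  norm_num at hmix

/-- The map `P ((x₁,x₂),(y₁,y₂)) = x₁x₂y₁y₂` on `ℝ² × ℝ²` is a symmetric
`(2,2)`-homogeneous polynomial, yet there is no symmetric `4`-linear map
`A : (ℝ²)⁴ → ℝ` with `P (x, y) = A (x, x, y, y)`; in particular `P` fails the entire
polarization formula at `x₀ = 0`, `x = e₁`, `y = e₂`. -/
theorem counterexample_entire_polarization :
    ∀ P : ℝ × ℝ → ℝ × ℝ → ℝ, (P = fun x y => x.1 * x.2 * y.1 * y.2) →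
      (∀ x y, P x y = P y x) ∧
      (∀ y, IsHomogPoly ℝ 2 fun x => P x y) ∧
      (∀ x, IsHomogPoly ℝ 2 fun y => P x y) ∧
      (¬ ∃ A : MultilinearMap ℝ (fun _ : Fin 4 => ℝ × ℝ) ℝ,
          (∀ (σ : Equiv.Perm (Fin 4)) (z : Fin 4 → ℝ × ℝ), A (z ∘ σ) = A z) ∧
          (∀ x y, P x y = A ![x, x, y, y])) ∧
      P (1, 0) (0, 1) ≠
        ((Nat.factorial 4 * 2 ^ 4 : ℕ) : ℝ)⁻¹ *
          ∑ ε : Fin 4 → ℤˣ,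
            (∏ k : Fin 4, ((ε k : ℤ) : ℝ)) *
              (fun z => P z z)
                ((0 : ℝ × ℝ) + ((ε 0 : ℤ) : ℝ) • ((1 : ℝ), (0 : ℝ))
                  + ((ε 1 : ℤ) : ℝ) • ((1 : ℝ), (0 : ℝ))
                  + ((ε 2 : ℤ) : ℝ) • ((0 : ℝ), (1 : ℝ))
                  + ((ε 3 : ℤ) : ℝ) • ((0 : ℝ), (1 : ℝ))) := by
  intro P hP
  subst hP
  refine ⟨fun x y => by ring, ?_, ?_, ?_, ?_⟩
  · intro y
    exact ⟨auxB (y.1 * y.2), fun x => by rw [auxB_apply]; ring⟩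
  · intro x
    exact ⟨auxB (x.1 * x.2), fun y => by rw [auxB_apply]; ring⟩
  · exact aux_no_symmetric
  · have huniv : (Finset.univ : Finset ℤˣ) = {1, -1} := by decide
    rw [← auxE4.sum_comp]
    have hE : ∀ p : ℤˣ × ℤˣ × ℤˣ × ℤˣ, auxE4 p = ![p.1, p.2.1, p.2.2.1, p.2.2.2] := fun p => rfl
    simp only [Fintype.sum_prod_type, hE]
    have hv2 : ∀ a b c d : ℤˣ, (![a, b, c, d] : Fin 4 → ℤˣ) 2 = c := fun _ _ _ _ => rfl
    have hv3 : ∀ a b c d : ℤˣ, (![a, b, c, d] : Fin 4 → ℤˣ) 3 = d := fun _ _ _ _ => rfl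
    rw [huniv]
    simp only [Finset.sum_pair (by decide : (1:ℤˣ) ≠ -1)]
    norm_num [Fin.prod_univ_four, Prod.fst_add, Prod.snd_add, Prod.smul_mk, Nat.factorial, hv2, hv3]
end

section
/- If n_i ≠ n_j for some 1 ≤ i ≠ j ≤ m, then the only symmetric (n₁,…,n_m)-homogeneous polynomial P : E^m → F is the zero map. -/
open scoped BigOperators

lemma homog_smul_aux {𝕂 : Type*} [RCLike 𝕂] {E F : Type*} [AddCommGroup E] [Module 𝕂 E]
    [AddCommGroup F] [Module 𝕂 F] {m : ℕ} {Q : E → F}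
    (h : ∃ A : MultilinearMap 𝕂 (fun _ : Fin m => E) F, ∀ x, Q x = A fun _ => x)
    (t : 𝕂) (x : E) : Q (t • x) = t ^ m • Q x := by
  obtain ⟨A, hA⟩ := h
  rw [hA, hA]
  simpa using A.map_smul_univ (fun _ : Fin m => t) (fun _ => x)

lemma upd_comp_swap_aux {E : Type*} {m : ℕ} (x : Fin m → E) (i j : Fin m) (v : E) :
    (Function.update x i v) ∘ (Equiv.swap i j) =
      Function.update (x ∘ Equiv.swap i j) j v := by
  funext k
  by_cases hk : k = j
  · subst hk; simp [Function.update, Equiv.swap_apply_right]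
  · by_cases hk' : k = i
    · subst hk'
      simp [Function.update, Equiv.swap_apply_left, hk, Ne.symm hk]
    · simp [Function.update, Equiv.swap_apply_of_ne_of_ne hk' hk, hk, hk']

theorem symm_multipoly_eq_zero_of_ne' {𝕂 : Type*} [RCLike 𝕂] {E F : Type*}
    [AddCommGroup E] [Module 𝕂 E] [AddCommGroup F] [Module 𝕂 F]
    {m : ℕ} (n : Fin m → ℕ) {i j : Fin m} (hij : i ≠ j) (hn : n i ≠ n j)
    (P : (Fin m → E) → F)
    (hsym : ∀ (σ : Equiv.Perm (Fin m)) (x : Fin m → E), P (x ∘ σ) = P x)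
    (hP : ∀ (j : Fin m) (x : Fin m → E),
      ∃ A : MultilinearMap 𝕂 (fun _ : Fin (n j) => E) F,
        ∀ y, P (Function.update x j y) = A fun _ => y) :
    ∀ x : Fin m → E, P x = 0 := by
  intro x
  set t : 𝕂 := 2 with ht
  set w : Fin m → E := x ∘ Equiv.swap i j with hw
  have h1 : P (Function.update x i (t • x i)) = t ^ n i • P x := by
    have := homog_smul_aux (hP i x) t (x i)
    simpa [Function.update_eq_self] using this
  have h2 : P (Function.update w j (t • x i)) = t ^ n j • P (Function.update w j (x i)) :=
    homog_smul_aux (hP j w) t (x i)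
  have key : ∀ v : E, P (Function.update x i v) = P (Function.update w j v) := by
    intro v
    rw [← hsym (Equiv.swap i j) (Function.update x i v), upd_comp_swap_aux]
  have hx : P (Function.update w j (x i)) = P x := by
    rw [← key, Function.update_eq_self]
  have heq : t ^ n i • P x = t ^ n j • P x := by
    rw [← h1, key, h2, hx]
  have hne : t ^ n i - t ^ n j ≠ 0 := by
    rw [sub_ne_zero]
    intro hc
    apply hn
    apply Nat.pow_right_injective (le_refl 2)
    have h2' : ((2 ^ n i : ℕ) : 𝕂) = ((2 ^ n j : ℕ) : 𝕂) := by
      push_cast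
      rw [ht] at hc
      exact_mod_cast hc
    exact_mod_cast h2'
  have : (t ^ n i - t ^ n j) • P x = 0 := by rw [sub_smul, heq, sub_self]
  exact (smul_eq_zero.mp this).resolve_left hne

/-- If `n_i ≠ n_j` for some `i ≠ j`, then the only symmetric `(n₁, …, n_m)`-homogeneous
polynomial `P : E^m → F` is the zero map. -/
theorem symm_multipoly_eq_zero_of_ne {𝕂 : Type*} [RCLike 𝕂] {E F : Type*}
    [AddCommGroup E] [Module 𝕂 E] [AddCommGroup F] [Module 𝕂 F]
    {m : ℕ} (n : Fin m → ℕ) {i j : Fin m} (hij : i ≠ j) (hn : n i ≠ n j)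
    (P : (Fin m → E) → F) (hsym : IsSymm' P) (hP : IsMultiPoly 𝕂 n P) :
    ∀ x : Fin m → E, P x = 0 :=
  symm_multipoly_eq_zero_of_ne' n hij hn P hsym hP
end

section
/- For all natural numbers n ≥ 1 and r with 0 ≤ r ≤ n: Σ_{δ∈{±1}ⁿ} δ₁⋯δₙ·(δ₁+⋯+δₙ)^r equals 0 if r < n, and equals n!·2ⁿ if r = n. -/
open scoped BigOperators

lemma units_int_sum (f : ℤˣ → ℤ) : ∑ u : ℤˣ, f u = f 1 + f (-1) := by
  rw [show (Finset.univ : Finset ℤˣ) = {1, -1} from by decide]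
  rw [Finset.sum_insert (by decide), Finset.sum_singleton]

lemma pow_diff (y : ℤ) (r : ℕ) :
    (y+1)^r - (y-1)^r =
      ∑ j ∈ Finset.range r, ((r.choose j : ℤ) * (1 - (-1)^(r-j))) * y^j := by
  rw [show y - 1 = y + (-1) from by ring, add_pow y 1 r, add_pow y (-1) r,
    ← Finset.sum_sub_distrib, Finset.sum_range_succ]
  simp only [Nat.sub_self, pow_zero, Nat.choose_self, Nat.cast_one, mul_one, sub_self, add_zero]
  exact Finset.sum_congr rfl fun j hj => by ring

lemma key (n : ℕ) : ∀ r : ℕ, r ≤ n → ∀ x : ℤ,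
    (∑ δ : Fin n → ℤˣ, (∏ k : Fin n, (δ k : ℤ)) * (x + ∑ k : Fin n, (δ k : ℤ)) ^ r) =
      if r < n then 0 else (n.factorial : ℤ) * 2 ^ n := by
  induction n with
  | zero =>
      intro r hr x
      interval_cases r
      simp
  | succ n ih =>
      intro r hr x
      have hsplit : (∑ δ : Fin (n+1) → ℤˣ, (∏ k, (δ k : ℤ)) * (x + ∑ k, (δ k : ℤ)) ^ r)
          = ∑ p : ℤˣ × (Fin n → ℤˣ), (∏ k, ((Fin.cons p.1 p.2 : Fin (n+1) → ℤˣ) k : ℤ)) *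
              (x + ∑ k, ((Fin.cons p.1 p.2 : Fin (n+1) → ℤˣ) k : ℤ)) ^ r := by
        exact (Fintype.sum_equiv (Fin.consEquiv fun _ => ℤˣ) _ _ (fun p => rfl)).symm
      rw [hsplit, Fintype.sum_prod_type, units_int_sum]
      simp only [Fin.prod_univ_succ, Fin.sum_univ_succ, Fin.cons_zero, Fin.cons_succ,
        Units.val_one, Units.val_neg, one_mul, neg_mul]
      have hcomb : ∀ g : Fin n → ℤˣ,
          (∏ k : Fin n, (g k : ℤ)) * (x + (1 + ∑ k : Fin n, (g k : ℤ))) ^ r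
            + (-((∏ k : Fin n, (g k : ℤ)) * (x + (-1 + ∑ k : Fin n, (g k : ℤ))) ^ r))
          = (∏ k : Fin n, (g k : ℤ)) *
              (((x + ∑ k : Fin n, (g k : ℤ)) + 1) ^ r - ((x + ∑ k : Fin n, (g k : ℤ)) - 1) ^ r) := by
        intro g; ring_nf
      rw [← Finset.sum_add_distrib]
      rw [Finset.sum_congr rfl fun g _ => hcomb g]
      simp only [pow_diff, Finset.mul_sum]
      rw [Finset.sum_comm]
      have hval : ∀ j ∈ Finset.range r,
          (∑ g : Fin n → ℤˣ, (∏ k : Fin n, (g k : ℤ)) *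
            (((r.choose j : ℤ) * (1 - (-1)^(r-j))) * (x + ∑ k : Fin n, (g k : ℤ))^j))
          = ((r.choose j : ℤ) * (1 - (-1)^(r-j))) *
              (if j < n then 0 else (n.factorial : ℤ) * 2 ^ n) := by
        intro j hj
        have hj' : j ≤ n := Nat.lt_succ_iff.mp (lt_of_lt_of_le (Finset.mem_range.mp hj) hr)
        rw [← ih j hj' x, Finset.mul_sum]
        exact Finset.sum_congr rfl fun g _ => by ring
      rw [Finset.sum_congr rfl hval]
      rcases Nat.lt_or_ge r (n+1) with h | h
      · rw [if_pos h]
        refine Finset.sum_eq_zero fun j hj => ?_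
        have : j < n := lt_of_lt_of_le (Finset.mem_range.mp hj) (Nat.lt_succ_iff.mp h)
        rw [if_pos this, mul_zero]
      · have hrn : r = n + 1 := le_antisymm hr h
        subst hrn
        rw [if_neg (lt_irrefl _), Finset.sum_range_succ]
        have h0 : ∀ j ∈ Finset.range n,
            ((n+1).choose j : ℤ) * (1 - (-1)^(n+1-j)) * (if j < n then 0 else (n.factorial : ℤ) * 2 ^ n) = 0 := by
          intro j hj
          rw [if_pos (Finset.mem_range.mp hj), mul_zero]
        rw [Finset.sum_congr rfl h0, Finset.sum_const_zero, zero_add,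
          if_neg (lt_irrefl _), Nat.choose_succ_self_right, Nat.add_sub_cancel_left]
        rw [Nat.factorial_succ]
        push_cast
        ring

/-- For `1 ≤ n` and `0 ≤ r ≤ n`,
`∑_{δ ∈ {±1}ⁿ} δ₁ ⋯ δₙ (δ₁ + ⋯ + δₙ)^r` equals `0` if `r < n` and equals `n! 2ⁿ` if `r = n`. -/
theorem sum_signs_pow (n r : ℕ) (hn : 1 ≤ n) (hr : r ≤ n) :
    (∑ δ : Fin n → ℤˣ, (∏ k : Fin n, (δ k : ℤ)) * (∑ k : Fin n, (δ k : ℤ)) ^ r) =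
      if r < n then 0 else (n.factorial : ℤ) * 2 ^ n := by
  have h := key n r hr 0
  simpa using h
end
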